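/- arXiv:2401.15892 — 5 statements merged into one kernel-verified Lean document; each statement's English description precedes it below -/
import Mathlib

section
/- Let t be a positive integer and r_1,...,r_t positive real numbers with 1/r_1 + ... + 1/r_t < 1. Then the set R_2(r_1,...,r_t) has asymptotic density zero, i.e. R_2(r_1,...,r_t)(x)/x → 0 as x → ∞. -/
open Filter Finset

namespace RomanoffAux

/-- number of primes in `(n, 2n]` -/
def d (n : ℕ) : ℕ := #{p ∈ Finset.Ico (n+1) (2*n+1) | p.Prime}

lemma pi_eq (N : ℕ) : N.primeCounting = #{p ∈ Finset.range (N+1) | p.Prime} := by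
  rw [Nat.primeCounting, Nat.primeCounting', Nat.count_eq_card_filter_range]

lemma pow_d_le (n : ℕ) : n ^ d n ≤ 16 ^ n := by
  have h1 : n ^ d n ≤ ∏ p ∈ {p ∈ Finset.Ico (n+1) (2*n+1) | p.Prime}, p := by
    apply Finset.pow_card_le_prod
    intro p hp
    simp only [Finset.mem_filter, Finset.mem_Ico] at hp
    omega
  have h2 : ∏ p ∈ {p ∈ Finset.Ico (n+1) (2*n+1) | p.Prime}, p ≤ primorial (2*n) := by
    rw [primorial]
    apply Finset.prod_le_prod_of_subset_of_one_le'
    · apply Finset.filter_subset_filter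
      intro x hx
      simp only [Finset.mem_Ico] at hx
      simp only [Finset.mem_range]
      omega
    · intro i hi _
      exact (Finset.mem_filter.mp hi).2.one_lt.le
  calc n ^ d n ≤ primorial (2*n) := h1.trans h2
    _ ≤ 4 ^ (2*n) := primorial_le_4_pow _
    _ = 16 ^ n := by rw [pow_mul]; norm_num

lemma d_pow (j : ℕ) : j * d (2^j) ≤ 4 * 2^j := by
  have h := pow_d_le (2^j)
  rw [← pow_mul] at h
  have h16 : (16:ℕ) ^ (2^j) = 2 ^ (4 * 2^j) := by rw [pow_mul]; norm_num
  rw [h16] at h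
  exact (Nat.pow_le_pow_iff_right (by norm_num)).mp h

lemma pi_double (n : ℕ) : (2*n).primeCounting ≤ n.primeCounting + d n := by
  rw [pi_eq, pi_eq, d]
  have h : Finset.range (2*n+1) = Finset.range (n+1) ∪ Finset.Ico (n+1) (2*n+1) := by
    rw [Finset.range_eq_Ico, Finset.range_eq_Ico]
    exact (Finset.Ico_union_Ico_eq_Ico (a := 0) (b := n+1) (c := 2*n+1) (by omega) (by omega)).symm
  rw [h, Finset.filter_union]
  exact Finset.card_union_le _ _

lemma pi_two : Nat.primeCounting 2 = 1 := by
  rw [pi_eq]; decide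

lemma pi_pow_le (m : ℕ) (hm : 1 ≤ m) :
    (2^m).primeCounting ≤ 1 + ∑ j ∈ Finset.Ico 1 m, d (2^j) := by
  induction m, hm using Nat.le_induction with
  | base => simpa using pi_two.le
  | succ m hm ih =>
      have h1 : (2^(m+1)).primeCounting ≤ (2^m).primeCounting + d (2^m) := by
        have : 2^(m+1) = 2 * 2^m := by ring
        rw [this]; exact pi_double _
      have h2 : ∑ j ∈ Finset.Ico 1 (m+1), d (2^j)
          = (∑ j ∈ Finset.Ico 1 m, d (2^j)) + d (2^m) := by
        rw [Finset.sum_Ico_succ_top hm]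
      omega


lemma sum_pow_div_le (M : ℕ) (hM : 1 ≤ M) :
    ∑ j ∈ Finset.Icc 1 M, (2:ℝ)^j / j ≤ 4 * 2^M / M := by
  induction M, hM using Nat.le_induction with
  | base => norm_num
  | succ M hM ih =>
      rcases Nat.lt_or_ge M 2 with h | h
      · interval_cases M
        · have e : Finset.Icc 1 (1+1) = {1, 2} := by decide
          rw [e, Finset.sum_pair (by norm_num : (1:ℕ) ≠ 2)]
          norm_num
      · rw [← Finset.Ico_add_one_right_eq_Icc] at ih ⊢
        rw [Finset.sum_Ico_succ_top (by omega)]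
        have hM0 : (0:ℝ) < M := by positivity
        have hM1 : (0:ℝ) < (M:ℝ) + 1 := by linarith
        have key : 4 * (2:ℝ)^M / M + 2^(M+1) / (M+1) ≤ 4 * 2^(M+1) / (M+1) := by
          have hM2 : (2:ℝ) ≤ M := by exact_mod_cast h
          have hp : (0:ℝ) < 2^M := by positivity
          have k1 : 4 * (2:ℝ)^M / M ≤ 6 * 2^M / (M+1) := by
            rw [div_le_div_iff₀ hM0 hM1]
            nlinarith [mul_nonneg hp.le (by linarith : (0:ℝ) ≤ 2*(M:ℝ) - 4)]
          have k2 : (2:ℝ)^(M+1)/((M:ℝ)+1) = 2*2^M/((M:ℝ)+1) := by rw [pow_succ]; ring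
          have k3 : 4*(2:ℝ)^(M+1)/((M:ℝ)+1) = 6*2^M/((M:ℝ)+1) + 2*2^M/((M:ℝ)+1) := by
            rw [pow_succ]; ring
          rw [k2, k3]
          linarith
        have := ih
        push_cast
        push_cast at this
        calc (∑ j ∈ Finset.Ico 1 (M+1), (2:ℝ)^j / j) + 2^(M+1) / (M+1)
            ≤ 4 * 2^M / M + 2^(M+1) / (M+1) := by linarith
          _ ≤ 4 * 2^(M+1) / (M+1) := key

lemma pi_pow_bound (m : ℕ) (hm : 1 ≤ m) :
    ((2^m : ℕ).primeCounting : ℝ) * m ≤ 17 * 2^m := by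
  rcases Nat.lt_or_ge m 2 with h | h
  · interval_cases m
    · simp [pi_two]; norm_num
  · -- m ≥ 2
    have hsum : (∑ j ∈ Finset.Ico 1 m, (d (2^j) : ℝ)) ≤ 16 * 2^m / m := by
      have h1 : ∀ j ∈ Finset.Ico 1 m, (d (2^j) : ℝ) ≤ 4 * 2^j / j := by
        intro j hj
        simp only [Finset.mem_Ico] at hj
        have hj0 : (0:ℝ) < j := by exact_mod_cast hj.1
        rw [le_div_iff₀ hj0]
        have := d_pow j
        have : (j : ℝ) * d (2^j) ≤ 4 * 2^j := by exact_mod_cast this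
        linarith
      have h2 : (∑ j ∈ Finset.Ico 1 m, (d (2^j) : ℝ)) ≤ ∑ j ∈ Finset.Ico 1 m, 4 * (2:ℝ)^j / j :=
        Finset.sum_le_sum h1
      have h3 : ∑ j ∈ Finset.Ico 1 m, 4 * (2:ℝ)^j / j = 4 * ∑ j ∈ Finset.Ico 1 m, (2:ℝ)^j / j := by
        rw [Finset.mul_sum]; apply Finset.sum_congr rfl; intro j _; ring
      have hm1 : m - 1 + 1 = m := by omega
      have h4 : Finset.Ico 1 m = Finset.Icc 1 (m-1) := by
        rw [← Finset.Ico_add_one_right_eq_Icc, hm1]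
      have h5 := sum_pow_div_le (m-1) (by omega)
      have hM0 : (0:ℝ) < ((m:ℝ) - 1) := by
        have : (2:ℝ) ≤ m := by exact_mod_cast h
        linarith
      have hcast : ((m - 1 : ℕ) : ℝ) = (m:ℝ) - 1 := by
        have : (1:ℕ) ≤ m := by omega
        push_cast [this]; ring
      have h6 : 4 * (2:ℝ)^(m-1) / ((m:ℝ)-1) ≤ 4 * 2^m / m := by
      -- 2^(m-1) * m ≤ 2^m * (m-1)  ⟺ m ≤ 2(m-1)
        have hm0 : (0:ℝ) < m := by positivity
        rw [div_le_div_iff₀ hM0 hm0]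
        have hpow : (2:ℝ)^m = 2 * 2^(m-1) := by
          rw [mul_comm, ← pow_succ]; congr 1; omega
        rw [hpow]
        have hp : (0:ℝ) < 2^(m-1) := by positivity
        have : (2:ℝ) ≤ m := by exact_mod_cast h
        nlinarith
      calc (∑ j ∈ Finset.Ico 1 m, (d (2^j) : ℝ))
          ≤ 4 * ∑ j ∈ Finset.Ico 1 m, (2:ℝ)^j / j := by rw [← h3]; exact h2
        _ = 4 * ∑ j ∈ Finset.Icc 1 (m-1), (2:ℝ)^j / j := by rw [h4]
        _ ≤ 4 * (4 * 2^(m-1) / ((m-1:ℕ):ℝ)) := by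
            have := sum_pow_div_le (m-1) (by omega)
            nlinarith [this]
        _ = 4 * (4 * 2^(m-1) / ((m:ℝ)-1)) := by rw [hcast]
        _ ≤ 4 * (4 * 2^m / m) := by
            have := h6
            nlinarith [h6]
        _ = 16 * 2^m / m := by ring
    have hpi : ((2^m : ℕ).primeCounting : ℝ) ≤ 1 + ∑ j ∈ Finset.Ico 1 m, (d (2^j) : ℝ) := by
      have := pi_pow_le m hm
      push_cast
      exact_mod_cast this
    have hm0 : (0:ℝ) < m := by positivity
    have hmle : (m:ℝ) ≤ 2^m := by
      exact_mod_cast (Nat.lt_two_pow_self (n := m)).le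
    calc ((2^m : ℕ).primeCounting : ℝ) * m
        ≤ (1 + 16 * 2^m / m) * m := by
          have : ((2^m : ℕ).primeCounting : ℝ) ≤ 1 + 16 * 2^m / m := by linarith
          nlinarith [this, hm0]
      _ = m + 16 * 2^m := by field_simp
      _ ≤ 17 * 2^m := by linarith

lemma cheb (N : ℕ) : (N.primeCounting : ℝ) * ((Nat.log 2 N : ℝ) + 1) ≤ 34 * N := by
  rcases Nat.eq_zero_or_pos N with rfl | hN
  · simp [Nat.primeCounting_zero]
  · set m := Nat.log 2 N + 1 with hm
    have h1 : N < 2^m := Nat.lt_pow_succ_log_self (by norm_num) N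
    have h2 : 2^(m-1) ≤ N := by
      have := Nat.pow_log_le_self 2 hN.ne'
      simpa [hm] using this
    have h3 : N.primeCounting ≤ (2^m).primeCounting :=
      Nat.monotone_primeCounting h1.le
    have h4 := pi_pow_bound m (by omega)
    have hcast : ((Nat.log 2 N : ℝ) + 1) = (m : ℝ) := by push_cast [hm]; ring
    rw [hcast]
    have h5 : ((2:ℝ))^m = 2 * 2^(m-1) := by
      rw [mul_comm, ← pow_succ]
      congr 1
      all_goals omega
    have h6 : ((2:ℕ)^(m-1) : ℝ) ≤ (N:ℝ) := by exact_mod_cast h2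
    have h7 : (N.primeCounting : ℝ) ≤ ((2^m : ℕ).primeCounting : ℝ) := by exact_mod_cast h3
    have hm0 : (0:ℝ) < m := by positivity
    push_cast at h6
    calc (N.primeCounting : ℝ) * m ≤ ((2^m : ℕ).primeCounting : ℝ) * m := by nlinarith
      _ ≤ 17 * 2^m := h4
      _ = 34 * 2^(m-1) := by rw [h5]; ring
      _ ≤ 34 * N := by linarith

end RomanoffAux

open Filter RomanoffAux

/-- If `1/r_1 + ... + 1/r_t < 1`, then the set `R₂(r_1,...,r_t)` has
asymptotic density zero. -/

theorem romanoff_density_zero (t : ℕ) (ht : 0 < t) (r : Fin t → ℝ)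
    (hr : ∀ i, 0 < r i) (hsum : ∑ i, (r i)⁻¹ < 1) :
    Tendsto (fun N : ℕ =>
      (({n : ℕ | n ≤ N ∧ Odd n ∧ ∃ (p : ℕ) (k : Fin t → ℕ), p.Prime ∧
        (∀ i, 0 < k i) ∧
        n = p + ∑ i, 2 ^ ⌊(k i : ℝ) ^ (r i)⌋₊} : Set ℕ).ncard : ℝ) / (N : ℝ))
      atTop (nhds 0) := by
  set s : ℝ := ∑ i, (r i)⁻¹ with hs
  set L : ℕ → ℝ := fun N => (Nat.log 2 N : ℝ) + 1 with hL
  have hLpos : ∀ N, 0 < L N := fun N => by positivity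
  -- key cardinality bound
  have key : ∀ N : ℕ, 1 ≤ N →
      (({n : ℕ | n ≤ N ∧ Odd n ∧ ∃ (p : ℕ) (k : Fin t → ℕ), p.Prime ∧
        (∀ i, 0 < k i) ∧
        n = p + ∑ i, 2 ^ ⌊(k i : ℝ) ^ (r i)⌋₊} : Set ℕ).ncard : ℝ)
        ≤ 34 * N * (L N) ^ (s - 1) := by
    intro N hN
    set B : Fin t → ℕ := fun i => ⌊(L N) ^ (r i)⁻¹⌋₊ with hB
    set A : Finset (ℕ × (Fin t → ℕ)) :=
      ({p ∈ Finset.range (N+1) | p.Prime}) ×ˢ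
        Fintype.piFinset (fun i => Finset.Icc 1 (B i)) with hA
    set g : ℕ × (Fin t → ℕ) → ℕ :=
      fun pk => pk.1 + ∑ i, 2 ^ ⌊(pk.2 i : ℝ) ^ (r i)⌋₊ with hg
    have hsub : ({n : ℕ | n ≤ N ∧ Odd n ∧ ∃ (p : ℕ) (k : Fin t → ℕ), p.Prime ∧
        (∀ i, 0 < k i) ∧
        n = p + ∑ i, 2 ^ ⌊(k i : ℝ) ^ (r i)⌋₊} : Set ℕ) ⊆ g '' ↑A := by
      rintro n ⟨hnN, hodd, p, k, hp, hkpos, heq⟩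
      refine ⟨(p, k), ?_, heq.symm⟩
      rw [hA]
      simp only [Finset.coe_product, Set.mem_prod, Finset.coe_filter, Set.mem_setOf_eq,
        Finset.mem_range, Finset.coe_sort_coe, Fintype.coe_piFinset, Set.mem_pi,
        Set.mem_univ, forall_true_left, Finset.mem_coe, Finset.mem_Icc]
      refine ⟨⟨?_, hp⟩, fun i => ⟨hkpos i, ?_⟩⟩
      · have : p ≤ n := by rw [heq]; exact Nat.le_add_right _ _
        omega
      · -- k i ≤ B i
        have hterm : 2 ^ ⌊(k i : ℝ) ^ (r i)⌋₊ ≤ n := by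
          rw [heq]
          calc 2 ^ ⌊(k i : ℝ) ^ (r i)⌋₊
              ≤ ∑ j, 2 ^ ⌊(k j : ℝ) ^ (r j)⌋₊ :=
                Finset.single_le_sum (f := fun j => 2 ^ ⌊(k j : ℝ) ^ (r j)⌋₊)
                  (fun j _ => Nat.zero_le _) (Finset.mem_univ i)
            _ ≤ p + ∑ j, 2 ^ ⌊(k j : ℝ) ^ (r j)⌋₊ := Nat.le_add_left _ _
        have hle : ⌊(k i : ℝ) ^ (r i)⌋₊ ≤ Nat.log 2 N :=
          (Nat.le_log_iff_pow_le one_lt_two (by omega)).mpr (hterm.trans hnN)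
        have hlt : (k i : ℝ) ^ (r i) < L N := by
          calc (k i : ℝ) ^ (r i) < ⌊(k i : ℝ) ^ (r i)⌋₊ + 1 := Nat.lt_floor_add_one _
            _ ≤ (Nat.log 2 N : ℝ) + 1 := by
                have : (⌊(k i : ℝ) ^ (r i)⌋₊ : ℝ) ≤ (Nat.log 2 N : ℝ) := by exact_mod_cast hle
                linarith
        have hk0 : (0:ℝ) ≤ (k i : ℝ) := Nat.cast_nonneg _
        have hid : ((k i : ℝ) ^ (r i)) ^ (r i)⁻¹ = (k i : ℝ) := by
          rw [← Real.rpow_mul hk0, mul_inv_cancel₀ (hr i).ne', Real.rpow_one]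
        have : (k i : ℝ) ≤ (L N) ^ (r i)⁻¹ := by
          rw [← hid]
          exact Real.rpow_le_rpow (Real.rpow_nonneg hk0 _) hlt.le
            (inv_nonneg.mpr (hr i).le)
        exact Nat.le_floor this
    have hcard : (({n : ℕ | n ≤ N ∧ Odd n ∧ ∃ (p : ℕ) (k : Fin t → ℕ), p.Prime ∧
        (∀ i, 0 < k i) ∧
        n = p + ∑ i, 2 ^ ⌊(k i : ℝ) ^ (r i)⌋₊} : Set ℕ).ncard : ℕ) ≤ A.card := by
      refine le_trans (le_trans (Set.ncard_le_ncard hsub (A.finite_toSet.image g))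
        (Set.ncard_image_le A.finite_toSet)) (le_of_eq (Set.ncard_coe_finset A))
    have hAcard : A.card = N.primeCounting * ∏ i, B i := by
      rw [hA, Finset.card_product, Fintype.card_piFinset]
      congr 1
      · exact (pi_eq N).symm
      · simp [Nat.card_Icc]
    -- now real estimates
    have hprod : ((∏ i, B i : ℕ) : ℝ) ≤ (L N) ^ s := by
      have h1 : ((∏ i, B i : ℕ) : ℝ) = ∏ i, (B i : ℝ) := by push_cast; rfl
      rw [h1, hs, Real.rpow_sum_of_pos (hLpos N)]
      apply Finset.prod_le_prod
      · intro i _; exact Nat.cast_nonneg _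
      · intro i _
        exact Nat.floor_le (Real.rpow_nonneg (hLpos N).le _)
    have hpi : (N.primeCounting : ℝ) ≤ 34 * N / L N := by
      rw [le_div_iff₀ (hLpos N)]
      exact cheb N
    have hLs : (0:ℝ) ≤ (L N) ^ s := Real.rpow_nonneg (hLpos N).le _
    calc (({n : ℕ | n ≤ N ∧ Odd n ∧ ∃ (p : ℕ) (k : Fin t → ℕ), p.Prime ∧
        (∀ i, 0 < k i) ∧
        n = p + ∑ i, 2 ^ ⌊(k i : ℝ) ^ (r i)⌋₊} : Set ℕ).ncard : ℝ)
        ≤ (A.card : ℝ) := by exact_mod_cast hcard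
      _ = (N.primeCounting : ℝ) * ((∏ i, B i : ℕ) : ℝ) := by rw [hAcard]; push_cast; ring
      _ ≤ (34 * N / L N) * (L N) ^ s := by
          apply mul_le_mul hpi hprod (Nat.cast_nonneg _)
          positivity
      _ = 34 * N * (L N) ^ (s - 1) := by
          rw [Real.rpow_sub (hLpos N), Real.rpow_one]
          field_simp
  -- tendsto part
  have hlog : Tendsto (fun N : ℕ => L N) atTop atTop := by
    have h1 : Tendsto (fun N : ℕ => Nat.log 2 N) atTop atTop := by
      apply tendsto_atTop_atTop.mpr
      intro b
      refine ⟨2^b, fun a ha => ?_⟩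
      calc b = Nat.log 2 (2^b) := (Nat.log_pow (by norm_num) b).symm
        _ ≤ Nat.log 2 a := Nat.log_mono_right ha
    have h2 : Tendsto (fun N : ℕ => ((Nat.log 2 N : ℕ) : ℝ)) atTop atTop :=
      tendsto_natCast_atTop_atTop.comp h1
    simpa [hL] using tendsto_atTop_add_const_right atTop (1:ℝ) h2
  have hrp : Tendsto (fun N : ℕ => (L N) ^ (s - 1)) atTop (nhds 0) := by
    have h : s - 1 = -(1 - s) := by ring
    rw [h]
    exact (tendsto_rpow_neg_atTop (by linarith)).comp hlog
  have h34 : Tendsto (fun N : ℕ => 34 * (L N) ^ (s - 1)) atTop (nhds 0) := by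
    simpa using hrp.const_mul 34
  apply squeeze_zero' (g := fun N : ℕ => 34 * (L N) ^ (s - 1))
  · exact Eventually.of_forall fun N => div_nonneg (Nat.cast_nonneg _) (Nat.cast_nonneg _)
  · filter_upwards [eventually_ge_atTop 1] with N hN
    have hN0 : (0:ℝ) < N := by exact_mod_cast hN
    rw [div_le_iff₀ hN0]
    calc _ ≤ 34 * (N:ℝ) * (L N) ^ (s - 1) := key N hN
      _ = 34 * (L N) ^ (s - 1) * N := by ring
  · exact h34
end

section
/- Let s ≥ 2 be an integer, r_1,...,r_s real numbers each greater than 1, and λ ≥ 1 a real number such that 1/r_1 + ... + 1/r_{s−1} + 1/(λ r_s) = 1. Then A(x) ≍ log x: there exist constants c_1, c_2 > 0 and x_0 such that c_1 log x ≤ A(x) ≤ c_2 log x for all x ≥ x_0. -/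
open Real Filter Finset

lemma rom_rpow_succ_le {ρ : ℝ} (hρ : 1 ≤ ρ) {k : ℕ} (hk : 1 ≤ k) :
    (k : ℝ) ^ ρ + 1 ≤ ((k : ℝ) + 1) ^ ρ := by
  have hk0 : (1:ℝ) ≤ (k:ℝ) := by exact_mod_cast hk
  have hb : 1 + ρ * (1/(k:ℝ)) ≤ (1 + 1/(k:ℝ)) ^ ρ :=
    one_add_mul_self_le_rpow_one_add (by nlinarith [one_div_pos.2 (show (0:ℝ) < k by linarith)]) hρ
  have h1 : ((k:ℝ) + 1) ^ ρ = (k:ℝ)^ρ * (1 + 1/(k:ℝ))^ρ := by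
    rw [← Real.mul_rpow (by positivity) (by positivity)]
    congr 1
    field_simp
  have hkρ : (k:ℝ) ≤ (k:ℝ)^ρ := by
    nth_rewrite 1 [← Real.rpow_one (k:ℝ)]
    exact Real.rpow_le_rpow_of_exponent_le hk0 hρ
  have h2 : (k:ℝ)^ρ + 1 ≤ (k:ℝ)^ρ * (1 + ρ * (1/(k:ℝ))) := by
    have hkρ' : (0:ℝ) < (k:ℝ)^ρ := by positivity
    have h3 : 1 ≤ (k:ℝ)^ρ * (1/(k:ℝ)) := by
      rw [mul_one_div, le_div_iff₀ (by linarith), one_mul]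
      exact hkρ
    nlinarith
  calc (k:ℝ)^ρ + 1 ≤ (k:ℝ)^ρ * (1 + ρ * (1/(k:ℝ))) := h2
    _ ≤ (k:ℝ)^ρ * (1 + 1/(k:ℝ))^ρ := by
        apply mul_le_mul_of_nonneg_left hb (by positivity)
    _ = ((k:ℝ)+1)^ρ := h1.symm

lemma rom_floor_rpow_lt {ρ : ℝ} (hρ : 1 ≤ ρ) {k m : ℕ} (hk : 1 ≤ k) (hkm : k < m) :
    ⌊(k:ℝ)^ρ⌋₊ < ⌊(m:ℝ)^ρ⌋₊ := by
  rw [Nat.lt_iff_add_one_le, Nat.le_floor_iff (by positivity)]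
  push_cast
  calc (⌊(k:ℝ)^ρ⌋₊ : ℝ) + 1 ≤ (k:ℝ)^ρ + 1 :=
        add_le_add_left (Nat.floor_le (by positivity)) 1
    _ ≤ ((k:ℝ) + 1)^ρ := rom_rpow_succ_le hρ hk
    _ ≤ (m:ℝ)^ρ := by
        apply Real.rpow_le_rpow (by positivity) _ (by linarith)
        have : (k:ℕ) + 1 ≤ m := hkm
        exact_mod_cast this


lemma rom_sum_range_two_pow (n : ℕ) : ∑ i ∈ Finset.range n, 2^i = 2^n - 1 := by
  induction n with
  | zero => simp
  | succ n ih =>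
    have h : 0 < 2^n := by positivity
    rw [Finset.sum_range_succ, ih, pow_succ]
    omega

lemma rom_coord_lower (f : ℕ → ℕ) (ρ : ℝ) (hρ : 1 < ρ)
    (hup : ∀ k : ℕ, 1 ≤ k → (f k : ℝ) ≤ (k:ℝ)^ρ)
    (hlow : ∀ᶠ k : ℕ in atTop, (2/3 : ℝ) * (k:ℝ)^ρ ≤ f k)
    (β : ℝ) (hβ : 0 < β) :
    ∃ d > (0:ℝ), ∀ᶠ N : ℕ in atTop, ∃ L U : ℕ, 1 ≤ L ∧
      d * (N:ℝ)^(ρ⁻¹) ≤ (U:ℝ) + 1 - L ∧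
      ∀ k : ℕ, L ≤ k → k ≤ U → β * N < f k ∧ (f k : ℝ) ≤ 4 * β * N := by
  have hρ0 : (0:ℝ) < ρ := by linarith
  have ht0 : (0:ℝ) < ρ⁻¹ := by positivity
  obtain ⟨k₀, hk₀⟩ := eventually_atTop.1 hlow
  set d₀ : ℝ := (4*β)^(ρ⁻¹) - (3*β)^(ρ⁻¹) with hd₀
  have hd₀pos : 0 < d₀ := by
    have := Real.rpow_lt_rpow (by positivity) (show 3*β < 4*β by linarith) ht0
    simp [hd₀]; linarith
  refine ⟨d₀/2, by positivity, ?_⟩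
  -- the quantity (3βN)^(ρ⁻¹) tends to infinity
  have htend : Tendsto (fun N : ℕ => (3*β*(N:ℝ))^(ρ⁻¹)) atTop atTop := by
    apply (tendsto_rpow_atTop ht0).comp
    exact (tendsto_natCast_atTop_atTop (R := ℝ)).const_mul_atTop (by positivity)
  have htend2 : Tendsto (fun N : ℕ => (N:ℝ)^(ρ⁻¹)) atTop atTop := by
    apply (tendsto_rpow_atTop ht0).comp
    exact tendsto_natCast_atTop_atTop (R := ℝ)
  filter_upwards [eventually_ge_atTop 1,
    htend.eventually_ge_atTop (k₀ : ℝ),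
    htend2.eventually_ge_atTop (2 / d₀)] with N hN1 hNk₀ hNd
  set L : ℕ := ⌈(3*β*(N:ℝ))^(ρ⁻¹)⌉₊ with hL
  set U : ℕ := ⌊(4*β*(N:ℝ))^(ρ⁻¹)⌋₊ with hU
  have hN0 : (0:ℝ) < (N:ℝ) := by exact_mod_cast hN1
  have hLpos : 1 ≤ L := Nat.one_le_ceil_iff.2 (by positivity)
  have hLk₀ : k₀ ≤ L := by
    have := Nat.le_ceil ((3*β*(N:ℝ))^(ρ⁻¹))
    exact_mod_cast (le_trans hNk₀ this)
  refine ⟨L, U, hLpos, ?_, ?_⟩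
  · have h1 : ((U:ℝ)) > (4*β*(N:ℝ))^(ρ⁻¹) - 1 := Nat.sub_one_lt_floor _
    have h2 : (L:ℝ) < (3*β*(N:ℝ))^(ρ⁻¹) + 1 := Nat.ceil_lt_add_one (by positivity)
    have h3 : (4*β*(N:ℝ))^(ρ⁻¹) = (4*β)^(ρ⁻¹) * (N:ℝ)^(ρ⁻¹) :=
      Real.mul_rpow (by positivity) (by positivity)
    have h4 : (3*β*(N:ℝ))^(ρ⁻¹) = (3*β)^(ρ⁻¹) * (N:ℝ)^(ρ⁻¹) :=
      Real.mul_rpow (by positivity) (by positivity)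
    have h5 : 2 ≤ d₀ * (N:ℝ)^(ρ⁻¹) := by
      rw [div_le_iff₀ hd₀pos] at hNd
      linarith
    have : d₀ * (N:ℝ)^(ρ⁻¹) = (4*β)^(ρ⁻¹) * (N:ℝ)^(ρ⁻¹) - (3*β)^(ρ⁻¹) * (N:ℝ)^(ρ⁻¹) := by
      rw [hd₀]; ring
    nlinarith [h1, h2]
  · intro k hLk hkU
    have hk1 : 1 ≤ k := le_trans hLpos hLk
    have hkR : ((3*β*(N:ℝ))^(ρ⁻¹) : ℝ) ≤ (k:ℝ) :=
      le_trans (Nat.le_ceil _) (by exact_mod_cast hLk)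
    have hkρ : 3*β*(N:ℝ) ≤ (k:ℝ)^ρ := by
      calc 3*β*(N:ℝ) = ((3*β*(N:ℝ))^(ρ⁻¹))^ρ :=
            (Real.rpow_inv_rpow (by positivity) (by positivity)).symm
        _ ≤ (k:ℝ)^ρ := Real.rpow_le_rpow (by positivity) hkR (le_of_lt hρ0)
    have hkρ' : (k:ℝ)^ρ ≤ 4*β*(N:ℝ) := by
      have hkR' : (k:ℝ) ≤ (4*β*(N:ℝ))^(ρ⁻¹) := by
        calc (k:ℝ) ≤ (U:ℝ) := by exact_mod_cast hkU
          _ ≤ (4*β*(N:ℝ))^(ρ⁻¹) := Nat.floor_le (by positivity)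
      calc (k:ℝ)^ρ ≤ ((4*β*(N:ℝ))^(ρ⁻¹))^ρ :=
            Real.rpow_le_rpow (by positivity) hkR' (le_of_lt hρ0)
        _ = 4*β*(N:ℝ) := Real.rpow_inv_rpow (by positivity) (by positivity)
    constructor
    · have := hk₀ k (le_trans hLk₀ hLk)
      nlinarith
    · exact le_trans (hup k hk1) hkρ'


lemma rom_coord_upper (f : ℕ → ℕ) (ρ : ℝ) (hρ : 0 < ρ)
    (hlow : ∀ᶠ k : ℕ in atTop, (2/3 : ℝ) * (k:ℝ)^ρ ≤ f k) :
    ∃ K : ℕ, ∀ (k : ℕ) (y : ℝ), 1 ≤ y → (f k : ℝ) ≤ y →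
      (k:ℝ) ≤ K + (3/2 * y)^(ρ⁻¹) := by
  obtain ⟨k₀, hk₀⟩ := eventually_atTop.1 hlow
  refine ⟨k₀, fun k y hy hfk => ?_⟩
  rcases lt_or_ge k k₀ with h | h
  · have h1 : (k:ℝ) ≤ (k₀:ℝ) := by exact_mod_cast h.le
    have h2 : (0:ℝ) ≤ (3/2 * y)^(ρ⁻¹) := by positivity
    linarith
  · have h1 : (2/3 : ℝ) * (k:ℝ)^ρ ≤ f k := hk₀ k h
    have h2 : (k:ℝ)^ρ ≤ 3/2 * y := by linarith
    have h3 : (k:ℝ) = ((k:ℝ)^ρ)^(ρ⁻¹) := (Real.rpow_rpow_inv (by positivity) hρ.ne').symm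
    have h4 : ((k:ℝ)^ρ)^(ρ⁻¹) ≤ (3/2*y)^(ρ⁻¹) :=
      Real.rpow_le_rpow (by positivity) h2 (by positivity)
    have : (0:ℝ) ≤ (k₀:ℝ) := by positivity
    linarith [h3 ▸ h4]

lemma rom_tendsto_rpow (ρ : ℝ) (hρ : 0 < ρ) :
    Tendsto (fun k : ℕ => (k:ℝ)^ρ) atTop atTop :=
  (tendsto_rpow_atTop hρ).comp (tendsto_natCast_atTop_atTop (R := ℝ))

lemma rom_low_A (ρ : ℝ) (hρ : 1 ≤ ρ) :
    ∀ᶠ k : ℕ in atTop, (2/3 : ℝ) * (k:ℝ)^ρ ≤ (⌊(k:ℝ)^ρ⌋₊ : ℕ) := by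
  filter_upwards [(rom_tendsto_rpow ρ (by linarith)).eventually_ge_atTop 3,
    eventually_ge_atTop 1] with k h3 h1
  have hfl : (k:ℝ)^ρ - 1 < (⌊(k:ℝ)^ρ⌋₊ : ℝ) := Nat.sub_one_lt_floor _
  linarith

lemma rom_up_B (lam ρr : ℝ) (hlam : 0 ≤ lam) (hr : 0 ≤ ρr) (k : ℕ) :
    ((⌊((⌊(k:ℝ)^lam⌋₊ : ℕ) : ℝ)^ρr⌋₊ : ℕ) : ℝ) ≤ (k:ℝ)^(lam*ρr) := by
  have h1 : ((⌊(k:ℝ)^lam⌋₊ : ℕ) : ℝ) ≤ (k:ℝ)^lam := Nat.floor_le (by positivity)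
  calc ((⌊((⌊(k:ℝ)^lam⌋₊ : ℕ) : ℝ)^ρr⌋₊ : ℕ) : ℝ) ≤ ((⌊(k:ℝ)^lam⌋₊ : ℕ) : ℝ)^ρr :=
        Nat.floor_le (by positivity)
    _ ≤ ((k:ℝ)^lam)^ρr := Real.rpow_le_rpow (by positivity) h1 hr
    _ = (k:ℝ)^(lam*ρr) := (Real.rpow_mul (by positivity) _ _).symm

lemma rom_low_B (lam ρr : ℝ) (hlam : 1 ≤ lam) (hr : 1 ≤ ρr) :
    ∀ᶠ k : ℕ in atTop, (2/3 : ℝ) * (k:ℝ)^(lam*ρr)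
      ≤ ((⌊((⌊(k:ℝ)^lam⌋₊ : ℕ) : ℝ)^ρr⌋₊ : ℕ) : ℝ) := by
  have hρr0 : (0:ℝ) < ρr := by linarith
  filter_upwards [(rom_tendsto_rpow lam (by linarith)).eventually_ge_atTop (4*ρr),
    (rom_tendsto_rpow (lam*ρr) (by nlinarith)).eventually_ge_atTop 12,
    eventually_ge_atTop 1] with k h4r h12 h1
  have hk1 : (1:ℝ) ≤ (k:ℝ) := by exact_mod_cast h1
  have hklam : (4:ℝ) ≤ (k:ℝ)^lam := by nlinarith
  have hm : (k:ℝ)^lam - 1 < ((⌊(k:ℝ)^lam⌋₊ : ℕ) : ℝ) := Nat.sub_one_lt_floor _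
  set m : ℕ := ⌊(k:ℝ)^lam⌋₊ with hmdef
  have hm0 : (0:ℝ) < (k:ℝ)^lam - 1 := by linarith
  have hfl2 : ((m:ℝ))^ρr - 1 < ((⌊((m:ℕ):ℝ)^ρr⌋₊ : ℕ) : ℝ) := Nat.sub_one_lt_floor _
  have hstep : ((k:ℝ)^lam - 1)^ρr ≤ (m:ℝ)^ρr :=
    Real.rpow_le_rpow (by linarith) hm.le hρr0.le
  -- ((k^lam) - 1)^ρr ≥ k^(lam ρr) * (1 - ρr * (k^lam)⁻¹)
  have hinv : (0:ℝ) < (k:ℝ)^lam := by linarith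
  have hbern : 1 - ρr * ((k:ℝ)^lam)⁻¹ ≤ (1 - ((k:ℝ)^lam)⁻¹)^ρr := by
    have h := one_add_mul_self_le_rpow_one_add
      (show (-1:ℝ) ≤ -((k:ℝ)^lam)⁻¹ by
        have : ((k:ℝ)^lam)⁻¹ ≤ 1 := by
          rw [inv_le_one_iff₀]; right; linarith
        linarith) hr
    have e1 : 1 + -((k:ℝ)^lam)⁻¹ = 1 - ((k:ℝ)^lam)⁻¹ := by ring
    have e2 : 1 + ρr * -((k:ℝ)^lam)⁻¹ = 1 - ρr * ((k:ℝ)^lam)⁻¹ := by ring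
    rw [e1, e2] at h
    exact h
  have hfactor : ((k:ℝ)^lam - 1)^ρr = (k:ℝ)^(lam*ρr) * (1 - ((k:ℝ)^lam)⁻¹)^ρr := by
    have hnn : (0:ℝ) ≤ 1 - ((k:ℝ)^lam)⁻¹ := by
      have : ((k:ℝ)^lam)⁻¹ ≤ 1 := by rw [inv_le_one_iff₀]; right; linarith
      linarith
    rw [Real.rpow_mul (by positivity : (0:ℝ) ≤ (k:ℝ)),
      ← Real.mul_rpow (by positivity) hnn]
    congr 1
    field_simp
  have hq : ρr * ((k:ℝ)^lam)⁻¹ ≤ 1/4 := by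
    rw [mul_inv_le_iff₀ hinv]  -- maybe wrong name/direction
    linarith
  have hge : (3/4:ℝ) * (k:ℝ)^(lam*ρr) ≤ ((k:ℝ)^lam - 1)^ρr := by
    rw [hfactor]
    have hpos : (0:ℝ) ≤ (k:ℝ)^(lam*ρr) := by positivity
    nlinarith
  have hbig : (12:ℝ) ≤ (k:ℝ)^(lam*ρr) := h12
  nlinarith [hstep, hfl2, hge]

lemma rom_mono_B (lam ρr : ℝ) (hlam : 1 ≤ lam) (hr : 1 ≤ ρr) {k m : ℕ}
    (hk : 1 ≤ k) (hkm : k < m) :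
    ⌊((⌊(k:ℝ)^lam⌋₊ : ℕ) : ℝ)^ρr⌋₊ < ⌊((⌊(m:ℝ)^lam⌋₊ : ℕ) : ℝ)^ρr⌋₊ := by
  have h1 : ⌊(k:ℝ)^lam⌋₊ < ⌊(m:ℝ)^lam⌋₊ := rom_floor_rpow_lt hlam hk hkm
  have hk1 : (1:ℝ) ≤ (k:ℝ) := by exact_mod_cast hk
  have h2 : 1 ≤ ⌊(k:ℝ)^lam⌋₊ := by
    rw [Nat.one_le_floor_iff]  -- guess
    exact Real.one_le_rpow hk1 (by linarith)
  exact rom_floor_rpow_lt hr h2 h1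


/-- The set `A = { 2^⌊k_1^{r_1}⌋ + ... + 2^⌊k_{s-1}^{r_{s-1}}⌋ + 2^⌊⌊k_s^λ⌋^{r_s}⌋ }`,
with `k_1, ..., k_s` ranging over positive integers (indices 0-based: the last index is
`s - 1`). -/
def romA (s : ℕ) (hs : 0 < s) (r : Fin s → ℝ) (lam : ℝ) : Set ℕ :=
  {n | ∃ k : Fin s → ℕ, (∀ i, 0 < k i) ∧
    n = (∑ i ∈ Finset.univ.filter (fun i : Fin s => (i : ℕ) < s - 1),
          2 ^ ⌊(k i : ℝ) ^ (r i)⌋₊)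
      + 2 ^ ⌊((⌊(k ⟨s - 1, by omega⟩ : ℝ) ^ lam⌋₊ : ℕ) : ℝ) ^ (r ⟨s - 1, by omega⟩)⌋₊}

set_option maxHeartbeats 2000000 in
/-- `A(x) ≍ log x`. -/
theorem romA_count_asymp (s : ℕ) (hs : 2 ≤ s) (r : Fin s → ℝ) (hr : ∀ i, 1 < r i)
    (lam : ℝ) (hlam : 1 ≤ lam)
    (hsum : (∑ i ∈ Finset.univ.filter (fun i : Fin s => (i : ℕ) < s - 1), (r i)⁻¹)
      + (lam * r ⟨s - 1, by omega⟩)⁻¹ = 1) :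
    ∃ c₁ > (0 : ℝ), ∃ c₂ > (0 : ℝ), ∃ x₀ : ℝ, ∀ x : ℝ, x₀ ≤ x →
      c₁ * Real.log x ≤
        (({n : ℕ | n ∈ romA s (by omega) r lam ∧ (n : ℝ) ≤ x} : Set ℕ).ncard : ℝ) ∧
      (({n : ℕ | n ∈ romA s (by omega) r lam ∧ (n : ℝ) ≤ x} : Set ℕ).ncard : ℝ)
        ≤ c₂ * Real.log x := by
  have hs1 : s - 1 < s := by omega
  set last : Fin s := ⟨s-1, hs1⟩ with hlast
  set ρ : Fin s → ℝ := fun i => if (i:ℕ) < s - 1 then r i else lam * r i with hρdef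
  set E : Fin s → ℕ → ℕ := fun i k =>
    if (i:ℕ) < s - 1 then ⌊(k:ℝ)^(r i)⌋₊
    else ⌊(((⌊(k:ℝ)^lam⌋₊ : ℕ)) : ℝ)^(r i)⌋₊ with hEdef
  set V : (Fin s → ℕ) → ℕ := fun k => ∑ i, 2 ^ (E i (k i)) with hVdef
  set t : Fin s → ℝ := fun i => (ρ i)⁻¹ with htdef
  have hρ1 : ∀ i, 1 < ρ i := by
    intro i
    by_cases h : (i:ℕ) < s - 1
    · simp only [hρdef, if_pos h]; exact hr i
    · simp only [hρdef, if_neg h]; nlinarith [hr i, hlam]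
  have hρ0 : ∀ i, (0:ℝ) < ρ i := fun i => lt_trans one_pos (hρ1 i)
  have htpos : ∀ i, (0:ℝ) < t i := fun i => by
    simp only [htdef]; exact inv_pos.2 (hρ0 i)
  have hfilter_not :
      Finset.univ.filter (fun i : Fin s => ¬ (i:ℕ) < s - 1) = {last} := by
    ext i
    simp only [Finset.mem_filter, Finset.mem_univ, true_and, Finset.mem_singleton]
    constructor
    · intro h
      have := i.isLt
      apply Fin.ext
      simp only [hlast]
      omega
    · intro h
      subst h
      simp only [hlast]
      omega
  have hVsplit : ∀ k : Fin s → ℕ,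
      (∑ i ∈ Finset.univ.filter (fun i : Fin s => (i : ℕ) < s - 1),
          2 ^ ⌊(k i : ℝ) ^ (r i)⌋₊)
        + 2 ^ ⌊((⌊(k ⟨s - 1, by omega⟩ : ℝ) ^ lam⌋₊ : ℕ) : ℝ) ^ (r ⟨s - 1, by omega⟩)⌋₊
      = V k := by
    intro k
    have h1 : V k = (∑ i ∈ Finset.univ.filter (fun i : Fin s => (i:ℕ) < s-1),
        2^(E i (k i)))
        + ∑ i ∈ Finset.univ.filter (fun i : Fin s => ¬ (i:ℕ) < s-1), 2^(E i (k i)) :=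
      (Finset.sum_filter_add_sum_filter_not _ _ _).symm
    rw [h1, hfilter_not, Finset.sum_singleton]
    congr 1
    · apply Finset.sum_congr rfl
      intro i hi
      rw [Finset.mem_filter] at hi
      simp only [hEdef, if_pos hi.2]
    · have hnot : ¬ ((last:ℕ) < s - 1) := by simp only [hlast]; omega
      simp only [hEdef, if_neg hnot]; rfl
  have hmem : ∀ n : ℕ, n ∈ romA s (by omega) r lam ↔
      ∃ k : Fin s → ℕ, (∀ i, 0 < k i) ∧ n = V k := by
    intro n
    simp only [romA, Set.mem_setOf_eq]
    constructor
    · rintro ⟨k, hk, hn⟩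
      exact ⟨k, hk, by rw [hn, hVsplit]⟩
    · rintro ⟨k, hk, rfl⟩
      exact ⟨k, hk, (hVsplit k).symm⟩
  have hEmono : ∀ (i : Fin s) {k m : ℕ}, 1 ≤ k → k < m → E i k < E i m := by
    intro i k m hk hkm
    by_cases h : (i:ℕ) < s - 1
    · simp only [hEdef, if_pos h]
      exact rom_floor_rpow_lt (hr i).le hk hkm
    · simp only [hEdef, if_neg h]
      exact rom_mono_B lam (r i) hlam (hr i).le hk hkm
  have hEup : ∀ (i : Fin s) (k : ℕ), 1 ≤ k → (E i k : ℝ) ≤ (k:ℝ)^(ρ i) := by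
    intro i k hk
    by_cases h : (i:ℕ) < s - 1
    · simp only [hEdef, hρdef, if_pos h]
      exact Nat.floor_le (by positivity)
    · simp only [hEdef, hρdef, if_neg h]
      exact rom_up_B lam (r i) (by linarith) (by linarith [hr i]) k
  have hElow : ∀ i : Fin s, ∀ᶠ k : ℕ in atTop, (2/3:ℝ) * (k:ℝ)^(ρ i) ≤ E i k := by
    intro i
    by_cases h : (i:ℕ) < s - 1
    · simp only [hEdef, hρdef, if_pos h]
      exact rom_low_A (r i) (hr i).le
    · simp only [hEdef, hρdef, if_neg h]
      exact rom_low_B lam (r i) hlam (hr i).le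
  have ht_sum : ∑ i, t i = 1 := by
    have h1 := Finset.sum_filter_add_sum_filter_not Finset.univ
      (fun i : Fin s => (i:ℕ) < s - 1) t
    rw [hfilter_not, Finset.sum_singleton] at h1
    rw [← h1]
    have h2 : ∑ i ∈ Finset.univ.filter (fun i : Fin s => (i:ℕ) < s - 1), t i
        = ∑ i ∈ Finset.univ.filter (fun i : Fin s => (i:ℕ) < s - 1), (r i)⁻¹ := by
      apply Finset.sum_congr rfl
      intro i hi
      rw [Finset.mem_filter] at hi
      simp only [htdef, hρdef, if_pos hi.2]
    have h3 : t last = (lam * r ⟨s - 1, by omega⟩)⁻¹ := by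
      have hnot : ¬ ((last:ℕ) < s - 1) := by simp only [hlast]; omega
      simp only [htdef, hρdef, if_neg hnot]; rfl
    rw [h2, h3]
    exact hsum
  -- β
  set β : Fin s → ℝ := fun i => (4:ℝ)^((i:ℕ)) / 4^s with hβdef
  have hβpos : ∀ i, 0 < β i := by intro i; simp only [hβdef]; positivity
  have hβtop : ∀ i : Fin s, 4 * β i ≤ 1 := by
    intro i
    have h1 : (i:ℕ) + 1 ≤ s := i.isLt
    have h2 : (4:ℝ)^((i:ℕ)+1) ≤ 4^s := pow_le_pow_right₀ (by norm_num) h1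
    have h3 : (0:ℝ) < 4^s := by positivity
    simp only [hβdef]
    have h4 : (4:ℝ)*((4:ℝ)^(i:ℕ)/4^s) = 4^((i:ℕ)+1)/4^s := by field_simp; ring
    rw [h4, div_le_one h3]
    exact h2
  have hβorder : ∀ i j : Fin s, (i:ℕ) < (j:ℕ) → 4 * β i ≤ β j := by
    intro i j hij
    have h2 : (4:ℝ)^((i:ℕ)+1) ≤ 4^(j:ℕ) := pow_le_pow_right₀ (by norm_num) hij
    have h3 : (0:ℝ) < (4:ℝ)^s := by positivity
    simp only [hβdef]
    have h4 : (4:ℝ)*((4:ℝ)^(i:ℕ)/4^s) = 4^((i:ℕ)+1)/4^s := by field_simp; ring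
    rw [h4]
    gcongr
  choose d hd hP using fun i : Fin s =>
    rom_coord_lower (fun k => E i k) (ρ i) (hρ1 i) (hEup i) (hElow i) (β i) (hβpos i)
  obtain ⟨N₁, hN₁⟩ := eventually_atTop.1 (eventually_all.2 hP)
  choose K hK using fun i : Fin s =>
    rom_coord_upper (fun k => E i k) (ρ i) (hρ0 i) (hElow i)
  set D : ℝ := ∏ i, d i with hDdef
  have hD : 0 < D := Finset.prod_pos (fun i _ => hd i)
  set C : Fin s → ℝ := fun i => (K i : ℝ) + 2 + (3/2)^(t i) with hCdef
  have hCpos : ∀ i, 0 < C i := by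
    intro i; simp only [hCdef]; positivity
  have hCprod : 0 < ∏ i, C i := Finset.prod_pos fun i _ => hCpos i
  have hlog2 : (0:ℝ) < Real.log 2 := Real.log_pos one_lt_two
  refine ⟨D / (2 * Real.log 2), by positivity, (∏ i, C i) / Real.log 2, by positivity,
    (2:ℝ)^(N₁ + 6), fun x hx => ?_⟩
  have hx2 : (2:ℝ) ≤ x := by
    calc (2:ℝ) = 2^1 := (pow_one 2).symm
      _ ≤ 2^(N₁+6) := pow_le_pow_right₀ one_le_two (by omega)
      _ ≤ x := hx
  have hx0 : (0:ℝ) < x := by linarith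
  set y : ℝ := Real.logb 2 x with hydef
  have hy1 : (1:ℝ) ≤ y := by
    rw [hydef, Real.le_logb_iff_rpow_le one_lt_two hx0, Real.rpow_one]; exact hx2
  have hyN : (N₁:ℝ) + 6 ≤ y := by
    rw [hydef, Real.le_logb_iff_rpow_le one_lt_two hx0]
    calc (2:ℝ)^((N₁:ℝ)+6) = (2:ℝ)^(((N₁+6 : ℕ)):ℝ) := by norm_num
      _ = (2:ℝ)^(N₁+6 : ℕ) := Real.rpow_natCast 2 _
      _ ≤ x := hx
  have hylogx : y * Real.log 2 = Real.log x := by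
    rw [hydef, Real.logb]
    field_simp
  have hSfin : {n : ℕ | n ∈ romA s (by omega) r lam ∧ (n : ℝ) ≤ x}.Finite := by
    apply Set.Finite.subset (Set.finite_Iic ⌊x⌋₊)
    rintro n ⟨_, hn⟩
    exact Set.mem_Iic.2 (Nat.le_floor hn)
  constructor
  · -- LOWER BOUND
    set N : ℕ := ⌊y⌋₊ - 1 with hNdef
    have hfl6 : N₁ + 6 ≤ ⌊y⌋₊ := Nat.le_floor (by push_cast; linarith)
    have hNge : N₁ ≤ N := by omega
    have hN1 : 1 ≤ N := by omega
    have hN0 : (0:ℝ) < (N:ℝ) := by exact_mod_cast hN1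
    have hNcast : (N:ℝ) = (⌊y⌋₊ : ℝ) - 1 := by
      have h1 : (1:ℕ) ≤ ⌊y⌋₊ := by omega
      rw [hNdef, Nat.cast_sub h1, Nat.cast_one]
    have hy6 : (6:ℝ) ≤ y := by
      have : (0:ℝ) ≤ (N₁:ℝ) := Nat.cast_nonneg _
      linarith
    have hN1y : ((N:ℝ)+1) ≤ y := by
      have hfle : (⌊y⌋₊ : ℝ) ≤ y := Nat.floor_le (by linarith)
      linarith [hNcast]
    have hNy : y / 2 ≤ (N:ℝ) := by
      have h1 : y - 1 < (⌊y⌋₊:ℝ) := Nat.sub_one_lt_floor y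
      linarith [hNcast]
    choose L U hL1 hcount hrange using hN₁ N hNge
    set box : Finset (Fin s → ℕ) := Fintype.piFinset fun i => Finset.Icc (L i) (U i)
      with hboxdef
    have hboxmem : ∀ k : Fin s → ℕ, k ∈ box ↔ ∀ i, L i ≤ k i ∧ k i ≤ U i := by
      intro k
      rw [hboxdef, Fintype.mem_piFinset]
      simp [Finset.mem_Icc]
    have hEblock : ∀ k : Fin s → ℕ, k ∈ box → ∀ i,
        β i * N < (E i (k i) : ℝ) ∧ (E i (k i) : ℝ) ≤ 4 * β i * N := by
      intro k hk i
      obtain ⟨h1, h2⟩ := (hboxmem k).1 hk i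
      exact hrange i (k i) h1 h2
    have hEneq : ∀ k k' : Fin s → ℕ, k ∈ box → k' ∈ box → ∀ i j : Fin s, (i:ℕ) < (j:ℕ) →
        E i (k i) < E j (k' j) := by
      intro k k' hk hk' i j hij
      have h1 := (hEblock k hk i).2
      have h2 := (hEblock k' hk' j).1
      have h3 : 4 * β i * N ≤ β j * N := by
        have := hβorder i j hij
        nlinarith [hN0]
      exact_mod_cast (by linarith : (E i (k i) : ℝ) < (E j (k' j) : ℝ))
    have hEleN : ∀ k : Fin s → ℕ, k ∈ box → ∀ i, E i (k i) ≤ N := by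
      intro k hk i
      have h1 := (hEblock k hk i).2
      have h2 : 4 * β i * N ≤ N := by nlinarith [hβtop i, hN0]
      exact_mod_cast (le_trans h1 h2 : (E i (k i):ℝ) ≤ (N:ℝ))
    have hinjE : ∀ k : Fin s → ℕ, k ∈ box → ∀ a ∈ Finset.univ, ∀ b ∈ Finset.univ,
        E a (k a) = E b (k b) → a = b := by
      intro k hk a _ b _ hab
      rcases lt_trichotomy (a:ℕ) (b:ℕ) with h|h|h
      · exact absurd hab (Nat.ne_of_lt (hEneq k k hk hk a b h))
      · exact Fin.ext h
      · exact absurd hab.symm (Nat.ne_of_lt (hEneq k k hk hk b a h))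
    have hinj : Set.InjOn V ↑box := by
      intro k hk k' hk' hVeq
      rw [Finset.mem_coe] at hk hk'
      have hs1' : ∑ j ∈ Finset.univ.image (fun i => E i (k i)), 2^j
          = ∑ j ∈ Finset.univ.image (fun i => E i (k' i)), 2^j := by
        rw [Finset.sum_image (hinjE k hk), Finset.sum_image (hinjE k' hk')]
        exact hVeq
      have himg := Finset.geomSum_injective (le_refl 2) hs1'
      funext i
      have h3 : E i (k i) ∈ Finset.univ.image (fun j => E j (k' j)) := by
        rw [← himg]
        exact Finset.mem_image_of_mem _ (Finset.mem_univ i)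
      obtain ⟨j, _, hj⟩ := Finset.mem_image.1 h3
      have hji : j = i := by
        rcases lt_trichotomy (j:ℕ) (i:ℕ) with h|h|h
        · exact absurd hj (Nat.ne_of_lt (hEneq k' k hk' hk j i h))
        · exact Fin.ext h
        · exact absurd hj.symm (Nat.ne_of_lt (hEneq k k' hk hk' i j h))
      rw [hji] at hj
      have hk1i : 1 ≤ k i := le_trans (hL1 i) ((hboxmem k).1 hk i).1
      have hk1i' : 1 ≤ k' i := le_trans (hL1 i) ((hboxmem k').1 hk' i).1
      rcases lt_trichotomy (k i) (k' i) with h|h|h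
      · exact absurd hj (Nat.ne_of_lt (hEmono i hk1i h)).symm
      · exact h
      · exact absurd hj (Nat.ne_of_lt (hEmono i hk1i' h))
    have himgsub : ↑(Finset.image V box) ⊆
        {n : ℕ | n ∈ romA s (by omega) r lam ∧ (n:ℝ) ≤ x} := by
      intro n hn
      rw [Finset.mem_coe, Finset.mem_image] at hn
      obtain ⟨k, hk, rfl⟩ := hn
      constructor
      · apply (hmem _).2
        refine ⟨k, fun i => ?_, rfl⟩
        have h1 := ((hboxmem k).1 hk i).1
        have h2 := hL1 i
        omega
      · have hVlt : V k < 2^(N+1) := by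
          have himg2 : Finset.univ.image (fun i => E i (k i)) ⊆ Finset.range (N+1) := by
            intro j hj
            obtain ⟨i, _, rfl⟩ := Finset.mem_image.1 hj
            rw [Finset.mem_range]
            exact Nat.lt_succ_of_le (hEleN k hk i)
          have heq2 : V k = ∑ j ∈ Finset.univ.image (fun i => E i (k i)), 2^j := by
            rw [Finset.sum_image (hinjE k hk)]
          have hle2 : ∑ j ∈ Finset.univ.image (fun i => E i (k i)), 2^j
              ≤ ∑ j ∈ Finset.range (N+1), 2^j :=
            Finset.sum_le_sum_of_subset himg2
          have h2p : (0:ℕ) < 2^(N+1) := by positivity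
          rw [heq2]
          rw [rom_sum_range_two_pow] at hle2
          omega
        have h2x : (((2:ℕ)^(N+1) : ℕ) : ℝ) ≤ x := by
          calc (((2:ℕ)^(N+1) : ℕ) : ℝ) = (2:ℝ)^(((N+1 : ℕ)) : ℝ) := by
                rw [Real.rpow_natCast]
                push_cast
                ring
            _ ≤ (2:ℝ)^y := Real.rpow_le_rpow_of_exponent_le one_le_two (by push_cast; linarith)
            _ = x := Real.rpow_logb (by norm_num) (by norm_num) hx0
        have : (V k : ℝ) ≤ (((2:ℕ)^(N+1) : ℕ) : ℝ) := by exact_mod_cast hVlt.le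
        exact le_trans this h2x
    have hcard2 : ∏ i, (U i + 1 - L i)
        ≤ ({n : ℕ | n ∈ romA s (by omega) r lam ∧ (n:ℝ) ≤ x} : Set ℕ).ncard := by
      calc ∏ i, (U i + 1 - L i) = box.card := by
            rw [hboxdef, Fintype.card_piFinset]
            simp [Nat.card_Icc]
        _ = (Finset.image V box).card := (Finset.card_image_of_injOn hinj).symm
        _ = ((Finset.image V box : Finset ℕ) : Set ℕ).ncard := (Set.ncard_coe_finset _).symm
        _ ≤ _ := Set.ncard_le_ncard himgsub hSfin
    have hcnt : ∀ i, d i * (N:ℝ)^(t i) ≤ ((U i + 1 - L i : ℕ) : ℝ) := by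
      intro i
      have h := hcount i
      have hpos : 0 < d i * (N:ℝ)^((ρ i)⁻¹) :=
        mul_pos (hd i) (Real.rpow_pos_of_pos hN0 _)
      have hLU : L i ≤ U i + 1 := by
        by_contra h'
        push_neg at h'
        have h'' : ((U i : ℕ) + 1 : ℝ) < (L i : ℝ) := by exact_mod_cast h'
        push_cast at h''
        linarith
      rw [Nat.cast_sub hLU]
      push_cast
      simp only [htdef]
      linarith
    have hDN : D * (N:ℝ) ≤ ((∏ i, (U i + 1 - L i) : ℕ) : ℝ) := by
      rw [Nat.cast_prod]
      calc D * (N:ℝ) = ∏ i, (d i * (N:ℝ)^(t i)) := by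
            rw [Finset.prod_mul_distrib, ← hDdef]
            congr 1
            rw [← Real.rpow_sum_of_pos hN0, ht_sum, Real.rpow_one]
        _ ≤ ∏ i, ((U i + 1 - L i : ℕ):ℝ) :=
            Finset.prod_le_prod
              (fun i _ => le_of_lt (mul_pos (hd i) (Real.rpow_pos_of_pos hN0 _)))
              (fun i _ => hcnt i)
    calc D / (2 * Real.log 2) * Real.log x = D / 2 * y := by
          rw [← hylogx]
          field_simp
      _ ≤ D * (N:ℝ) := by nlinarith
      _ ≤ ((∏ i, (U i + 1 - L i) : ℕ) : ℝ) := hDN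
      _ ≤ _ := by exact_mod_cast hcard2
  · set M : Fin s → ℕ := fun i => K i + ⌈((3/2:ℝ) * y)^((ρ i)⁻¹)⌉₊ with hMdef
    have hsub : {n : ℕ | n ∈ romA s (by omega) r lam ∧ (n : ℝ) ≤ x} ⊆
        ↑(Finset.image V (Fintype.piFinset fun i => Finset.Iic (M i))) := by
      rintro n ⟨hnA, hnx⟩
      obtain ⟨k, hkpos, rfl⟩ := (hmem n).1 hnA
      refine Finset.mem_coe.2 (Finset.mem_image.2 ⟨k, ?_, rfl⟩)
      rw [Fintype.mem_piFinset]
      intro i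
      rw [Finset.mem_Iic]
      have h1 : 2^(E i (k i)) ≤ V k := by
        rw [hVdef]
        exact Finset.single_le_sum (f := fun j => 2^(E j (k j))) (fun j _ => Nat.zero_le _)
          (Finset.mem_univ i)
      have h2 : ((2:ℝ))^((E i (k i) : ℕ) : ℝ) ≤ x := by
        rw [Real.rpow_natCast]
        calc ((2:ℝ))^(E i (k i)) = ((2^(E i (k i)) : ℕ) : ℝ) := by push_cast; ring
          _ ≤ (V k : ℝ) := by exact_mod_cast h1
          _ ≤ x := hnx
      have h3 : (E i (k i) : ℝ) ≤ y := by
        rw [hydef]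
        exact (Real.le_logb_iff_rpow_le one_lt_two hx0).2 h2
      have h4 := hK i (k i) y hy1 h3
      have h5 : ((3/2 : ℝ) * y)^((ρ i)⁻¹) ≤ (⌈((3/2 :ℝ) * y)^((ρ i)⁻¹)⌉₊ : ℝ) := Nat.le_ceil _
      have h6 : (k i : ℝ) ≤ (M i : ℝ) := by
        simp only [hMdef]
        push_cast
        linarith
      exact_mod_cast h6
    have hcard1 : ({n : ℕ | n ∈ romA s (by omega) r lam ∧ (n : ℝ) ≤ x}).ncard
        ≤ ∏ i, (M i + 1) := by
      calc ({n : ℕ | n ∈ romA s (by omega) r lam ∧ (n : ℝ) ≤ x}).ncard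
          ≤ ((Finset.image V (Fintype.piFinset fun i => Finset.Iic (M i)) : Finset ℕ) : Set ℕ).ncard :=
            Set.ncard_le_ncard hsub (Finset.finite_toSet _)
        _ = (Finset.image V (Fintype.piFinset fun i => Finset.Iic (M i))).card :=
            Set.ncard_coe_finset _
        _ ≤ (Fintype.piFinset fun i => Finset.Iic (M i)).card := Finset.card_image_le
        _ = ∏ i, (M i + 1) := by
            rw [Fintype.card_piFinset]
            simp [Nat.card_Iic]
    have hMle : ∀ i, ((M i : ℝ) + 1) ≤ C i * y^(t i) := by
      intro i
      have h5 : (⌈((3/2:ℝ) * y)^((ρ i)⁻¹)⌉₊ : ℝ) < ((3/2:ℝ)*y)^((ρ i)⁻¹) + 1 :=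
        Nat.ceil_lt_add_one (by positivity)
      have h6 : ((3/2:ℝ)*y)^((ρ i)⁻¹) = (3/2:ℝ)^(t i) * y^(t i) := by
        simp only [htdef]
        exact Real.mul_rpow (by norm_num) (by linarith)
      have h7 : 1 ≤ y^(t i) := Real.one_le_rpow hy1 (htpos i).le
      have h8 : (0:ℝ) < (3/2:ℝ)^(t i) := by positivity
      have h9 : (0:ℝ) ≤ (K i : ℝ) := Nat.cast_nonneg _
      simp only [hMdef, hCdef]
      push_cast
      nlinarith
    have hprod : ((∏ i, (M i + 1) : ℕ) : ℝ) ≤ (∏ i, C i) * y := by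
      push_cast
      calc ∏ i, ((M i : ℝ) + 1) ≤ ∏ i, (C i * y^(t i)) := by
            apply Finset.prod_le_prod
            · intro i _; positivity
            · intro i _; exact hMle i
        _ = (∏ i, C i) * ∏ i, y^(t i) := Finset.prod_mul_distrib
        _ = (∏ i, C i) * y^(∑ i, t i) := by
            rw [← Real.rpow_sum_of_pos (by linarith : (0:ℝ) < y)]
        _ = (∏ i, C i) * y := by rw [ht_sum, Real.rpow_one]
    calc (({n : ℕ | n ∈ romA s (by omega) r lam ∧ (n : ℝ) ≤ x} : Set ℕ).ncard : ℝ)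
        ≤ ((∏ i, (M i + 1) : ℕ) : ℝ) := by exact_mod_cast hcard1
      _ ≤ (∏ i, C i) * y := hprod
      _ = (∏ i, C i) / Real.log 2 * Real.log x := by
          rw [← hylogx]
          field_simp
end

section
/- Let r > 1 be a real number. There exist constants C = C(r) such that for every real K ≥ 2, every integer e ≥ 1 and every integer ℓ with 0 ≤ ℓ ≤ e − 1, the number of positive integers k ≤ K with ⌊k^r⌋ ≡ ℓ (mod e) is at most C·( K/e + sup_{θ ∈ [−1,1]} |Σ_{k ≤ K} ψ(k^r/e + θ)| + 1 ), where ψ(t) = t − ⌊t⌋ − 1/2 and the inner sum is over positive integers k ≤ K. -/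
/-- The sawtooth function `ψ(t) = t − ⌊t⌋ − 1/2`. -/
noncomputable def saw (t : ℝ) : ℝ := t - ⌊t⌋ - 1 / 2

lemma floor_div_int' (x : ℝ) (e : ℤ) (he : 0 < e) : ⌊x / e⌋ = ⌊x⌋ / e := by
  have he' : (0:ℝ) < e := by exact_mod_cast he
  rw [Int.floor_eq_iff]
  constructor
  · rw [le_div_iff₀ he']
    have h1 : (⌊x⌋ / e) * e ≤ ⌊x⌋ := Int.ediv_mul_le _ (ne_of_gt he)
    calc ((⌊x⌋ / e : ℤ) : ℝ) * e = (((⌊x⌋ / e) * e : ℤ) : ℝ) := by push_cast; ring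
      _ ≤ (⌊x⌋ : ℝ) := by exact_mod_cast h1
      _ ≤ x := Int.floor_le x
  · rw [div_lt_iff₀ he']
    have h2 : ⌊x⌋ < (⌊x⌋ / e + 1) * e := Int.lt_ediv_add_one_mul_self _ he
    calc x < (⌊x⌋ : ℝ) + 1 := Int.lt_floor_add_one x
      _ ≤ (((⌊x⌋ / e + 1) * e : ℤ) : ℝ) := by exact_mod_cast h2
      _ = (((⌊x⌋ / e : ℤ) : ℝ) + 1) * e := by push_cast; ring

lemma ediv_sub_ediv' (n e : ℤ) (he : 0 < e) :
    n / e - (n - 1) / e = if e ∣ n then 1 else 0 := by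
  have hq := Int.mul_ediv_add_emod n e
  set q := n / e with hqdef
  set s := n % e with hsdef
  have hs0 : 0 ≤ s := Int.emod_nonneg n (ne_of_gt he)
  have hse : s < e := Int.emod_lt_of_pos n he
  by_cases hd : e ∣ n
  · have hs : s = 0 := Int.emod_eq_zero_of_dvd hd
    have hn1 : n - 1 = (e - 1) + e * (q - 1) := by rw [← hq, hs]; ring
    have : (n - 1) / e = (e - 1) / e + (q - 1) := by rw [hn1, Int.add_mul_ediv_left _ _ (ne_of_gt he)]
    rw [if_pos hd, this, Int.ediv_eq_zero_of_lt (by omega) (by omega)]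
    omega
  · have hs : s ≠ 0 := fun h => hd (Int.dvd_of_emod_eq_zero (hsdef ▸ h))
    have hn1 : n - 1 = (s - 1) + e * q := by omega
    have : (n - 1) / e = (s - 1) / e + q := by rw [hn1, Int.add_mul_ediv_left _ _ (ne_of_gt he)]
    rw [if_neg hd, this, Int.ediv_eq_zero_of_lt (by omega) (by omega)]
    omega

lemma indicator_eq (x : ℝ) (hx : 0 ≤ x) (e l : ℕ) (he : 1 ≤ e) :
    (if ⌊x⌋₊ ≡ l [MOD e] then (1:ℝ) else 0)
      = 1 / e + saw ((x - l - 1) / e) - saw ((x - l) / e) := by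
  have he' : (0:ℤ) < (e:ℤ) := by exact_mod_cast he
  have her : (0:ℝ) < (e:ℝ) := by exact_mod_cast he
  have f1 : ⌊(x - (l:ℝ)) / (e:ℝ)⌋ = (⌊x⌋ - (l:ℤ)) / (e:ℤ) := by
    have h := floor_div_int' (x - (l:ℝ)) (e:ℤ) he'
    push_cast at h
    rw [h]
    congr 1
    rw [show (l:ℝ) = ((l:ℤ):ℝ) by push_cast; ring, Int.floor_sub_intCast]
  have f2 : ⌊(x - (l:ℝ) - 1) / (e:ℝ)⌋ = (⌊x⌋ - (l:ℤ) - 1) / (e:ℤ) := by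
    have h := floor_div_int' (x - (l:ℝ) - 1) (e:ℤ) he'
    push_cast at h
    rw [h]
    congr 1
    rw [show x - (l:ℝ) - 1 = x - (((l:ℤ) + 1 : ℤ):ℝ) by push_cast; ring, Int.floor_sub_intCast]
    ring
  have hcond : (⌊x⌋₊ ≡ l [MOD e]) ↔ (e:ℤ) ∣ (⌊x⌋ - (l:ℤ)) := by
    rw [Nat.modEq_iff_dvd, ← Int.natCast_floor_eq_floor hx, dvd_sub_comm]
  have main : ((⌊x⌋ - (l:ℤ))/(e:ℤ) - (⌊x⌋ - (l:ℤ) - 1)/(e:ℤ) : ℤ)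
      = if ⌊x⌋₊ ≡ l [MOD e] then (1:ℤ) else 0 := by
    rw [ediv_sub_ediv' _ _ he']
    simp only [hcond]
  calc (if ⌊x⌋₊ ≡ l [MOD e] then (1:ℝ) else 0)
      = ((if ⌊x⌋₊ ≡ l [MOD e] then (1:ℤ) else 0 : ℤ) : ℝ) := by split <;> simp
    _ = (((⌊x⌋ - (l:ℤ))/(e:ℤ) - (⌊x⌋ - (l:ℤ) - 1)/(e:ℤ) : ℤ) : ℝ) := by rw [main]
    _ = (⌊(x - (l:ℝ))/(e:ℝ)⌋ : ℝ) - (⌊(x - (l:ℝ) - 1)/(e:ℝ)⌋ : ℝ) := by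
        rw [f1, f2]; push_cast; ring
    _ = 1 / e + saw ((x - l - 1) / e) - saw ((x - l) / e) := by
        simp only [saw]; field_simp; ring

lemma abs_saw_le (t : ℝ) : |saw t| ≤ 1 := by
  have h1 := Int.floor_le t
  have h2 := Int.lt_floor_add_one t
  rw [saw, abs_le]
  constructor <;> linarith


/-- the number of positive `k ≤ K` with `⌊k^r⌋ ≡ ℓ (mod e)` is
`≪_r K/e + sup_{θ ∈ [−1,1]} |Σ_{k ≤ K} ψ(k^r/e + θ)| + 1`. -/
theorem count_congruence_via_saw (r : ℝ) (hr : 1 < r) :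
    ∃ C : ℝ, ∀ K : ℝ, 2 ≤ K → ∀ e : ℕ, 1 ≤ e → ∀ l : ℕ, l ≤ e - 1 →
      (({k : ℕ | 0 < k ∧ (k : ℝ) ≤ K ∧ ⌊(k : ℝ) ^ r⌋₊ ≡ l [MOD e]} : Set ℕ).ncard : ℝ) ≤
        C * (K / e +
          (⨆ θ : Set.Icc (-1 : ℝ) 1,
            |∑ k ∈ Finset.Icc 1 ⌊K⌋₊, saw ((k : ℝ) ^ r / e + (θ : ℝ))|) + 1) := by
  refine ⟨2, fun K hK e he l hl => ?_⟩
  have he' : (0:ℝ) < (e:ℝ) := by exact_mod_cast he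
  have hK0 : (0:ℝ) ≤ K := by linarith
  have hle : (l:ℝ) + 1 ≤ (e:ℝ) := by
    have : l + 1 ≤ e := by omega
    exact_mod_cast this
  have hl0 : (0:ℝ) ≤ (l:ℝ) := Nat.cast_nonneg l
  set N := ⌊K⌋₊ with hN
  set S := Finset.Icc 1 N with hS
  set θ1 : ℝ := -(l:ℝ)/e with hθ1
  set θ2 : ℝ := -((l:ℝ)+1)/e with hθ2
  have hset : {k : ℕ | 0 < k ∧ (k:ℝ) ≤ K ∧ ⌊(k:ℝ)^r⌋₊ ≡ l [MOD e]}
      = ↑(S.filter fun k : ℕ => ⌊(k:ℝ)^r⌋₊ ≡ l [MOD e]) := by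
    ext k
    simp only [Set.mem_setOf_eq, Finset.coe_filter, Finset.mem_Icc, hS, hN,
      Nat.le_floor_iff hK0]
    constructor
    · rintro ⟨h1, h2, h3⟩; exact ⟨⟨h1, h2⟩, h3⟩
    · rintro ⟨⟨h1, h2⟩, h3⟩; exact ⟨h1, h2, h3⟩
  rw [hset, Set.ncard_coe_finset]
  have hsum : ((S.filter fun k : ℕ => ⌊(k:ℝ)^r⌋₊ ≡ l [MOD e]).card : ℝ)
      = ∑ k ∈ S, if ⌊(k:ℝ)^r⌋₊ ≡ l [MOD e] then (1:ℝ) else 0 := by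
    rw [Finset.sum_boole]
  have hrw : ∀ k ∈ S, (if ⌊(k:ℝ)^r⌋₊ ≡ l [MOD e] then (1:ℝ) else 0)
      = 1/(e:ℝ) + saw ((k:ℝ)^r/e + θ2) - saw ((k:ℝ)^r/e + θ1) := by
    intro k _
    have hx : (0:ℝ) ≤ (k:ℝ)^r := Real.rpow_nonneg (Nat.cast_nonneg k) r
    rw [indicator_eq _ hx e l he,
      show ((k:ℝ)^r - l - 1)/e = (k:ℝ)^r/e + θ2 by rw [hθ2]; ring,
      show ((k:ℝ)^r - l)/e = (k:ℝ)^r/e + θ1 by rw [hθ1]; ring]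
  rw [hsum, Finset.sum_congr rfl hrw]
  simp only [sub_eq_add_neg, Finset.sum_add_distrib, Finset.sum_neg_distrib]
  have hcard : ((S.card : ℕ) : ℝ) ≤ K := by
    have h1 : S.card = N := by rw [hS, Nat.card_Icc]; omega
    rw [h1]
    exact_mod_cast Nat.floor_le hK0
  have hbdd : BddAbove (Set.range fun θ : Set.Icc (-1:ℝ) 1 =>
      |∑ k ∈ Finset.Icc 1 N, saw ((k:ℝ)^r/e + (θ:ℝ))|) := by
    refine ⟨(S.card : ℝ), ?_⟩
    rintro y ⟨θ, rfl⟩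
    calc |∑ k ∈ Finset.Icc 1 N, saw ((k:ℝ)^r/e + (θ:ℝ))|
        ≤ ∑ k ∈ Finset.Icc 1 N, |saw ((k:ℝ)^r/e + (θ:ℝ))| :=
          Finset.abs_sum_le_sum_abs _ _
      _ ≤ ∑ _k ∈ Finset.Icc 1 N, (1:ℝ) := Finset.sum_le_sum fun k _ => abs_saw_le _
      _ = (S.card : ℝ) := by rw [hS]; simp
  have hmem1 : θ1 ∈ Set.Icc (-1:ℝ) 1 := by
    have hd1 : (l:ℝ)/e ≤ 1 := by
      rw [div_le_one he']; linarith
    have hd0 : (0:ℝ) ≤ (l:ℝ)/e := by positivity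
    constructor <;> rw [hθ1] <;> · rw [neg_div]; linarith
  have hmem2 : θ2 ∈ Set.Icc (-1:ℝ) 1 := by
    have hd1 : ((l:ℝ)+1)/e ≤ 1 := by
      rw [div_le_one he']; linarith
    have hd0 : (0:ℝ) ≤ ((l:ℝ)+1)/e := by positivity
    constructor <;> rw [hθ2] <;> · rw [neg_div]; linarith
  have h1 := le_ciSup hbdd ⟨θ1, hmem1⟩
  have h2 := le_ciSup hbdd ⟨θ2, hmem2⟩
  simp only at h1 h2
  set T := ⨆ θ : Set.Icc (-1:ℝ) 1,
      |∑ k ∈ Finset.Icc 1 N, saw ((k:ℝ)^r/e + (θ:ℝ))| with hT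
  have hb1 : -(∑ k ∈ S, saw ((k:ℝ)^r/e + θ1)) ≤ T := by
    rw [hS]
    calc -(∑ k ∈ Finset.Icc 1 N, saw ((k:ℝ)^r/e + θ1))
        ≤ |∑ k ∈ Finset.Icc 1 N, saw ((k:ℝ)^r/e + θ1)| := neg_le_abs _
      _ ≤ T := h1
  have hb2 : (∑ k ∈ S, saw ((k:ℝ)^r/e + θ2)) ≤ T := by
    rw [hS]
    calc (∑ k ∈ Finset.Icc 1 N, saw ((k:ℝ)^r/e + θ2))
        ≤ |∑ k ∈ Finset.Icc 1 N, saw ((k:ℝ)^r/e + θ2)| := le_abs_self _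
      _ ≤ T := h2
  have hconst : ∑ _k ∈ S, (1/(e:ℝ)) = (S.card : ℝ) / e := by
    rw [Finset.sum_const, nsmul_eq_mul]; ring
  rw [hconst]
  have hKe : (S.card : ℝ)/e ≤ K/e := by
    gcongr
  have hKe0 : (0:ℝ) ≤ K/e := by positivity
  linarith
end

section
/- For every ε > 0, the series Σ_d 1/(d · e_2(d)^ε), taken over all odd positive integers d, converges, where e_2(d) is the multiplicative order of 2 modulo d. -/
open Finset

lemma harmonic_le (J : ℕ) : ∑ j ∈ Finset.range J, (1:ℝ)/(j+1) ≤ 1 + Real.log J := by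
  induction J with
  | zero => simp
  | succ J ih =>
    rcases Nat.eq_zero_or_pos J with hJ | hJ
    · subst hJ; simp
    rw [Finset.sum_range_succ]
    have hJ0 : (0:ℝ) < J := by exact_mod_cast hJ
    have hJ1 : (0:ℝ) < (J:ℝ) + 1 := by linarith
    have key : Real.log J + 1/(J+1) ≤ Real.log ((J:ℝ)+1) := by
      have h := Real.log_le_sub_one_of_pos (x := (J:ℝ)/((J:ℝ)+1)) (by positivity)
      rw [Real.log_div (ne_of_gt hJ0) (ne_of_gt hJ1)] at h
      have : (J:ℝ)/((J:ℝ)+1) - 1 = -(1/((J:ℝ)+1)) := by field_simp; ring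
      rw [this] at h
      linarith
    push_cast
    linarith

lemma prime_block_card (j : ℕ) :
    j * ((Finset.range (2^(j+1))).filter (fun p => Nat.Prime p ∧ 2^j ≤ p)).card ≤ 2^(j+2) := by
  set P := (Finset.range (2^(j+1))).filter (fun p => Nat.Prime p ∧ 2^j ≤ p) with hP
  have h1 : (2^j) ^ P.card ≤ ∏ p ∈ P, p := by
    apply Finset.pow_card_le_prod
    intro x hx
    exact (Finset.mem_filter.mp hx).2.2
  have h2 : ∏ p ∈ P, p ≤ primorial (2^(j+1)) := by
    unfold primorial
    apply Finset.prod_le_prod_of_subset_of_one_le'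
    · intro x hx
      rw [Finset.mem_filter] at hx ⊢
      exact ⟨Finset.mem_range.mpr (Nat.lt_succ_of_lt (Finset.mem_range.mp hx.1)), hx.2.1⟩
    · intro i hi _
      exact (Finset.mem_filter.mp hi).2.pos
  have h3 : primorial (2^(j+1)) ≤ 4 ^ (2^(j+1)) := primorial_le_4_pow _
  have h4 : (2:ℕ) ^ (j * P.card) ≤ 2 ^ (2^(j+2)) := by
    calc (2:ℕ) ^ (j * P.card) = (2^j) ^ P.card := by rw [pow_mul]
    _ ≤ ∏ p ∈ P, p := h1
    _ ≤ 4 ^ (2^(j+1)) := h2.trans h3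
    _ = 2 ^ (2^(j+2)) := by
        rw [show (4:ℕ) = 2^2 by norm_num, ← pow_mul, pow_succ]
        ring_nf
  exact (Nat.pow_le_pow_iff_right (le_refl 2)).mp h4

lemma mertens_le (J : ℕ) :
    ∑ p ∈ (Finset.range (2^(J+1))).filter Nat.Prime, (1:ℝ)/p ≤ 5 + 4 * Real.log (J+1) := by
  have hmap : ∀ p ∈ (Finset.range (2^(J+1))).filter Nat.Prime,
      Nat.log 2 p ∈ Finset.range (J+1) := by
    intro p hp
    rw [Finset.mem_filter, Finset.mem_range] at hp
    rw [Finset.mem_range]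
    exact Nat.log_lt_of_lt_pow hp.2.ne_zero hp.1
  rw [← Finset.sum_fiberwise_of_maps_to hmap]
  have hinner : ∀ j ∈ Finset.range (J+1),
      ∑ p ∈ ((Finset.range (2^(J+1))).filter Nat.Prime).filter (fun p => Nat.log 2 p = j),
        (1:ℝ)/p ≤ if j = 0 then (0:ℝ) else (4:ℝ)/j := by
    intro j _
    set F := ((Finset.range (2^(J+1))).filter Nat.Prime).filter (fun p => Nat.log 2 p = j) with hF
    have hsub : F ⊆ (Finset.range (2^(j+1))).filter (fun p => Nat.Prime p ∧ 2^j ≤ p) := by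
      intro p hp
      rw [Finset.mem_filter, Finset.mem_filter, Finset.mem_range] at hp
      obtain ⟨⟨_, hpr⟩, hlog⟩ := hp
      rw [Finset.mem_filter, Finset.mem_range]
      refine ⟨?_, hpr, ?_⟩
      · rw [← hlog]
        exact Nat.lt_pow_succ_log_self (by norm_num) p
      · rw [← hlog]
        exact Nat.pow_log_le_self 2 hpr.ne_zero
    rcases Nat.eq_zero_or_pos j with rfl | hj
    · have : ((Finset.range (2^(0+1))).filter (fun p => Nat.Prime p ∧ 2^0 ≤ p)) = ∅ := by decide
      rw [this, Finset.subset_empty] at hsub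
      simp [hsub]
    have hjne : j ≠ 0 := hj.ne'
    simp only [hjne, if_false]
    have hterm : ∀ p ∈ F, (1:ℝ)/p ≤ 1/2^j := by
      intro p hp
      have := (Finset.mem_filter.mp (hsub hp)).2.2
      have h2 : (2:ℝ)^j ≤ p := by exact_mod_cast this
      apply one_div_le_one_div_of_le (by positivity) h2
    have hcard : (F.card : ℝ) ≤ 2^(j+2)/j := by
      have h1 : F.card ≤ ((Finset.range (2^(j+1))).filter
          (fun p => Nat.Prime p ∧ 2^j ≤ p)).card := Finset.card_le_card hsub
      have h2 := prime_block_card j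
      have h3 : j * F.card ≤ 2^(j+2) := le_trans (Nat.mul_le_mul_left j h1) h2
      have h4 : (j:ℝ) * F.card ≤ 2^(j+2) := by exact_mod_cast h3
      have hj0 : (0:ℝ) < j := by exact_mod_cast hj
      rw [le_div_iff₀ hj0]
      linarith [h4]
    calc ∑ p ∈ F, (1:ℝ)/p ≤ F.card • ((1:ℝ)/2^j) := Finset.sum_le_card_nsmul F _ _ hterm
    _ = (F.card : ℝ) * (1/2^j) := by rw [nsmul_eq_mul]
    _ ≤ (2^(j+2)/j) * (1/2^j) := by
        apply mul_le_mul_of_nonneg_right hcard (by positivity)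
    _ = 4/j := by
        rw [show (2:ℝ)^(j+2) = 2^j * 4 by ring]
        field_simp
  calc ∑ j ∈ Finset.range (J+1), ∑ p ∈ ((Finset.range (2^(J+1))).filter Nat.Prime).filter
        (fun p => Nat.log 2 p = j), (1:ℝ)/p
      ≤ ∑ j ∈ Finset.range (J+1), (if j = 0 then (0:ℝ) else (4:ℝ)/j) := Finset.sum_le_sum hinner
  _ = ∑ i ∈ Finset.range J, (4:ℝ)/(i+1) := by
      rw [Finset.sum_range_succ']
      simp
  _ = 4 * ∑ i ∈ Finset.range J, (1:ℝ)/(i+1) := by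
      rw [Finset.mul_sum]
      apply Finset.sum_congr rfl
      intro i _
      ring
  _ ≤ 4 * (1 + Real.log J) := by
      have := harmonic_le J
      linarith
  _ ≤ 5 + 4 * Real.log (J+1) := by
      have hlog : Real.log J ≤ Real.log (J+1) := by
        rcases Nat.eq_zero_or_pos J with rfl | hJ
        · simp
        · apply Real.log_le_log (by exact_mod_cast hJ)
          push_cast; linarith
      push_cast
      linarith

lemma prime_pow_ratio_le (p v : ℕ) (hp : 2 ≤ p) :
    (∑ k ∈ Finset.range (v+1), (p:ℝ)^k) / (p:ℝ)^v ≤ Real.exp (2/p) := by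
  have hp0 : (0:ℝ) < p := by positivity
  have hp2 : (2:ℝ) ≤ p := by exact_mod_cast hp
  set x : ℝ := 1/p with hx
  have hx0 : 0 ≤ x := by positivity
  have hx2 : x ≤ 1/2 := by
    rw [hx]
    rw [div_le_div_iff₀ hp0 (by norm_num)]
    linarith
  have hx1 : x < 1 := by linarith
  have h1 : (∑ k ∈ Finset.range (v+1), (p:ℝ)^k) / (p:ℝ)^v
      = ∑ j ∈ Finset.range (v+1), x^j := by
    rw [Finset.sum_div, ← Finset.sum_range_reflect]
    apply Finset.sum_congr rfl
    intro j hj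
    have hjv : j ≤ v := Nat.lt_succ_iff.mp (Finset.mem_range.mp hj)
    have : v + 1 - 1 - j = v - j := by omega
    rw [this]
    rw [hx, div_pow, one_pow, div_eq_div_iff (by positivity) (by positivity), one_mul,
      ← pow_add]
    congr 1
    omega
  rw [h1]
  have h2 : ∑ j ∈ Finset.range (v+1), x^j ≤ (1-x)⁻¹ := by
    rw [← tsum_geometric_of_lt_one hx0 hx1]
    exact Summable.sum_le_tsum _ (fun i _ => by positivity) (summable_geometric_of_lt_one hx0 hx1)
  have h3 : (1-x)⁻¹ ≤ 1 + 2*x := by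
    rw [inv_le_iff_one_le_mul₀ (by linarith)]
    nlinarith
  have h4 : 1 + 2*x ≤ Real.exp (2*x) := by
    have := Real.add_one_le_exp (2*x)
    linarith
  have : (2:ℝ)/p = 2*x := by rw [hx]; ring
  rw [this]
  linarith

lemma sum_divisors_recip_le (L : ℕ) (hL : L ≠ 0) :
    ∑ d ∈ L.divisors, (1:ℝ)/d ≤ Real.exp (2 * ∑ p ∈ L.primeFactors, (1:ℝ)/p) := by
  have step1 : ∑ d ∈ L.divisors, (1:ℝ)/d = ∑ d ∈ L.divisors, (d:ℝ)/L := by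
    rw [← Nat.sum_div_divisors L (fun d => (1:ℝ)/d)]
    apply Finset.sum_congr rfl
    intro d hd
    obtain ⟨hdvd, -⟩ := Nat.mem_divisors.mp hd
    have hd0 : (d:ℝ) ≠ 0 := by
      exact_mod_cast (Nat.pos_of_mem_divisors hd).ne'
    rw [Nat.cast_div hdvd hd0, one_div_div]
  have step2 : (∑ d ∈ L.divisors, (d:ℝ))
      = ∏ p ∈ L.primeFactors, ∑ k ∈ Finset.range (L.factorization p + 1), (p:ℝ)^k := by
    have h := Nat.sum_divisors hL
    rw [← Nat.cast_sum, h]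
    push_cast
    rfl
  have step3 : (L:ℝ) = ∏ p ∈ L.primeFactors, (p:ℝ)^(L.factorization p) := by
    have h2 : ∏ p ∈ L.primeFactors, p ^ L.factorization p = L := by
      rw [← Nat.support_factorization]
      exact Nat.factorization_prod_pow_eq_self hL
    exact_mod_cast (congrArg (fun n : ℕ => (n:ℝ)) h2).symm
  rw [step1, ← Finset.sum_div, step2, step3, ← Finset.prod_div_distrib]
  calc ∏ p ∈ L.primeFactors,
        (∑ k ∈ Finset.range (L.factorization p + 1), (p:ℝ)^k) / (p:ℝ)^(L.factorization p)
      ≤ ∏ p ∈ L.primeFactors, Real.exp (2/p) := by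
        apply Finset.prod_le_prod
        · intro p hp
          have hppos : 0 < p := (Nat.prime_of_mem_primeFactors hp).pos
          positivity
        · intro p hp
          exact prime_pow_ratio_le p _ (Nat.prime_of_mem_primeFactors hp).two_le
  _ = Real.exp (2 * ∑ p ∈ L.primeFactors, (1:ℝ)/p) := by
      rw [← Real.exp_sum, Finset.mul_sum]
      congr 1
      apply Finset.sum_congr rfl
      intro p _
      ring

lemma sum_primeFactors_recip_le (L J : ℕ) (hL : L ≠ 0) (h : L ≤ 2^(2^(J+1))) :
    ∑ p ∈ L.primeFactors, (1:ℝ)/p ≤ 6 + 4 * Real.log (J+1) := by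
  classical
  set S := L.primeFactors.filter (fun p => p < 2^(J+1)) with hS
  set T := L.primeFactors.filter (fun p => ¬ p < 2^(J+1)) with hT
  have hunion : ∑ p ∈ L.primeFactors, (1:ℝ)/p
      = ∑ p ∈ S, (1:ℝ)/p + ∑ p ∈ T, (1:ℝ)/p :=
    (Finset.sum_filter_add_sum_filter_not _ _ _).symm
  have hSle : ∑ p ∈ S, (1:ℝ)/p ≤ 5 + 4 * Real.log (J+1) := by
    refine le_trans (Finset.sum_le_sum_of_subset_of_nonneg ?_ ?_) (mertens_le J)
    · intro p hp
      rw [hS, Finset.mem_filter] at hp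
      rw [Finset.mem_filter, Finset.mem_range]
      exact ⟨hp.2, Nat.prime_of_mem_primeFactors hp.1⟩
    · intro p _ _
      positivity
  have hTcard : T.card ≤ 2^(J+1) := by
    have h1 : (2^(J+1))^T.card ≤ ∏ p ∈ T, p := by
      apply Finset.pow_card_le_prod
      intro p hp
      rw [hT, Finset.mem_filter] at hp
      omega
    have h2 : ∏ p ∈ T, p ∣ L :=
      dvd_trans (Finset.prod_dvd_prod_of_subset _ _ _ (Finset.filter_subset _ _))
        (Nat.prod_primeFactors_dvd L)
    have h3 : ∏ p ∈ T, p ≤ L := Nat.le_of_dvd (Nat.pos_of_ne_zero hL) h2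
    have h4 : (2:ℕ)^((J+1) * T.card) ≤ 2^(2^(J+1)) := by
      rw [pow_mul]
      exact le_trans h1 (le_trans h3 h)
    have h5 := (Nat.pow_le_pow_iff_right (le_refl 2)).mp h4
    calc T.card ≤ (J+1) * T.card := Nat.le_mul_of_pos_left _ (by omega)
    _ ≤ 2^(J+1) := h5
  have hTle : ∑ p ∈ T, (1:ℝ)/p ≤ 1 := by
    have hterm : ∀ p ∈ T, (1:ℝ)/p ≤ 1/2^(J+1) := by
      intro p hp
      rw [hT, Finset.mem_filter] at hp
      apply one_div_le_one_div_of_le (by positivity)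
      exact_mod_cast Nat.le_of_not_lt hp.2
    calc ∑ p ∈ T, (1:ℝ)/p ≤ T.card • ((1:ℝ)/2^(J+1)) := Finset.sum_le_card_nsmul _ _ _ hterm
    _ = (T.card:ℝ) * (1/2^(J+1)) := nsmul_eq_mul _ _
    _ ≤ (2^(J+1):ℝ) * (1/2^(J+1)) := by
        apply mul_le_mul_of_nonneg_right _ (by positivity)
        exact_mod_cast hTcard
    _ = 1 := by field_simp
  rw [hunion]
  linarith

noncomputable def Lprod (y : ℕ) : ℕ := ∏ m ∈ Finset.Icc 1 y, (2^m - 1)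

lemma Lprod_pos (y : ℕ) : 0 < Lprod y := by
  unfold Lprod
  apply Finset.prod_pos
  intro m hm
  have : 1 ≤ m := (Finset.mem_Icc.mp hm).1
  have h2 : 2 ≤ 2^m := by
    calc 2 = 2^1 := (pow_one 2).symm
    _ ≤ 2^m := Nat.pow_le_pow_right (by norm_num) this
  omega

lemma Lprod_le (y : ℕ) : Lprod y ≤ 2^(y*y) := by
  unfold Lprod
  calc ∏ m ∈ Finset.Icc 1 y, (2^m - 1) ≤ ∏ m ∈ Finset.Icc 1 y, 2^m := by
        apply Finset.prod_le_prod'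
        intro m _
        exact Nat.sub_le _ _
  _ = 2^(∑ m ∈ Finset.Icc 1 y, m) := Finset.prod_pow_eq_pow_sum _ _ _
  _ ≤ 2^(y*y) := by
      apply Nat.pow_le_pow_right (by norm_num)
      calc ∑ m ∈ Finset.Icc 1 y, m ≤ ∑ m ∈ Finset.Icc 1 y, y := by
            apply Finset.sum_le_sum
            intro m hm
            exact (Finset.mem_Icc.mp hm).2
      _ = (Finset.Icc 1 y).card * y := by rw [Finset.sum_const, smul_eq_mul]
      _ ≤ y * y := by
          apply Nat.mul_le_mul_right
          simp [Nat.card_Icc]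

lemma order_pos {d : ℕ} (hd : Odd d) : 0 < orderOf (2 : ZMod d) := by
  have hd0 : d ≠ 0 := by
    rintro rfl
    simp [Nat.odd_iff] at hd
  haveI : NeZero d := ⟨hd0⟩
  have hu : IsUnit (2 : ZMod d) := by
    have : IsUnit ((2:ℕ) : ZMod d) := (ZMod.isUnit_iff_coprime 2 d).mpr
      (Nat.coprime_two_left.mpr hd)
    simpa using this
  obtain ⟨u, hu⟩ := hu
  rw [← hu, orderOf_units]
  exact orderOf_pos u

lemma dvd_two_pow_sub_one {d : ℕ} (hd : Odd d) : d ∣ 2^(orderOf (2 : ZMod d)) - 1 := by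
  have hd0 : d ≠ 0 := by
    rintro rfl
    simp [Nat.odd_iff] at hd
  haveI : NeZero d := ⟨hd0⟩
  rw [← ZMod.natCast_eq_zero_iff]
  rw [Nat.cast_sub Nat.one_le_two_pow]
  push_cast
  simp [pow_orderOf_eq_one]

lemma dvd_Lprod {d y : ℕ} (hd : Odd d) (hy : orderOf (2 : ZMod d) ≤ y) : d ∣ Lprod y := by
  have h1 : 1 ≤ orderOf (2:ZMod d) := order_pos hd
  have h2 : (2^(orderOf (2:ZMod d)) - 1) ∣ Lprod y :=
    Finset.dvd_prod_of_mem _ (Finset.mem_Icc.mpr ⟨h1, hy⟩)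
  exact (dvd_two_pow_sub_one hd).trans h2

lemma sum_divisors_Lprod_le (k : ℕ) :
    ∑ d ∈ (Lprod (2^(k+1))).divisors, (1:ℝ)/d
      ≤ Real.exp 12 * (2*(k:ℝ)+2)^8 := by
  have hL0 : Lprod (2^(k+1)) ≠ 0 := (Lprod_pos _).ne'
  have hsize : Lprod (2^(k+1)) ≤ 2^(2^(2*k+1+1)) := by
    calc Lprod (2^(k+1)) ≤ 2^(2^(k+1) * 2^(k+1)) := Lprod_le _
    _ = 2^(2^(2*k+1+1)) := by
        rw [← pow_add]
        congr 2
        omega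
  have h2 := sum_primeFactors_recip_le _ (2*k+1) hL0 hsize
  have h1 := sum_divisors_recip_le _ hL0
  have hx : (0:ℝ) < 2*(k:ℝ)+2 := by positivity
  have h3 : (2:ℝ) * ∑ p ∈ (Lprod (2^(k+1))).primeFactors, (1:ℝ)/p
      ≤ 12 + 8 * Real.log (2*(k:ℝ)+2) := by
    have hc : ((2*k+1 : ℕ):ℝ) + 1 = 2*(k:ℝ)+2 := by push_cast; ring
    rw [← hc]
    linarith
  calc ∑ d ∈ (Lprod (2^(k+1))).divisors, (1:ℝ)/d
      ≤ Real.exp (2 * ∑ p ∈ (Lprod (2^(k+1))).primeFactors, (1:ℝ)/p) := h1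
  _ ≤ Real.exp (12 + 8 * Real.log (2*(k:ℝ)+2)) := Real.exp_le_exp.mpr h3
  _ = Real.exp 12 * (2*(k:ℝ)+2)^8 := by
      rw [Real.exp_add]
      congr 1
      rw [show (8:ℝ) * Real.log (2*(k:ℝ)+2) = ((8:ℕ):ℝ) * Real.log (2*(k:ℝ)+2) by norm_num,
        ← Real.log_pow, Real.exp_log (by positivity)]

/-- Erdős–Turán: for every `ε > 0`, the series `Σ 1/(d · e₂(d)^ε)` over odd
positive integers `d` converges, where `e₂(d)` is the multiplicative order of `2` mod `d`. -/
theorem summable_recip_mul_order_rpow (ε : ℝ) (hε : 0 < ε) :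
    Summable (fun d : {d : ℕ // Odd d} =>
      1 / (((d : ℕ) : ℝ) * ((orderOf (2 : ZMod (d : ℕ)) : ℕ) : ℝ) ^ ε)) := by
  classical
  set c : ℝ := ((1:ℝ)/2) ^ ε with hc
  have hc0 : 0 < c := Real.rpow_pos_of_pos (by norm_num) ε
  have hc1 : c < 1 := Real.rpow_lt_one (by norm_num) (by norm_num) hε
  have hrpow_eq : ∀ k : ℕ, ((2:ℝ)^k)^ε = ((2:ℝ)^ε)^k := by
    intro k
    rw [← Real.rpow_natCast 2 k, ← Real.rpow_natCast ((2:ℝ)^ε) k,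
      ← Real.rpow_mul (by norm_num), ← Real.rpow_mul (by norm_num), mul_comm]
  have hck : ∀ k : ℕ, c^k * ((2:ℝ)^k)^ε = 1 := by
    intro k
    rw [hrpow_eq, hc, ← mul_pow, ← Real.mul_rpow (by norm_num) (by norm_num)]
    norm_num
  set g : ℕ → ℝ := fun k => Real.exp 12 * (2*(k:ℝ)+2)^8 * c^k with hg
  have hgsum : Summable g := by
    have hnorm : ‖c‖ < 1 := by rwa [Real.norm_eq_abs, abs_of_pos hc0]
    have base : Summable (fun k : ℕ => (k:ℝ)^8 * c^k) :=
      summable_pow_mul_geometric_of_norm_lt_one 8 hnorm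
    have geo : Summable (fun k : ℕ => c^k) := summable_geometric_of_lt_one hc0.le hc1
    have htot : Summable (fun k : ℕ =>
        Real.exp 12 * 2^16 * ((k:ℝ)^8 * c^k) + Real.exp 12 * 2^16 * c^k) :=
      (base.mul_left _).add (geo.mul_left _)
    apply htot.of_nonneg_of_le
    · intro k
      rw [hg]
      positivity
    · intro k
      rw [hg]
      have hk0 : (0:ℝ) ≤ k := Nat.cast_nonneg k
      have hpoly : (2*(k:ℝ)+2)^8 ≤ 2^16 * (k:ℝ)^8 + 2^16 := by
        rcases le_total ((k:ℝ)) 1 with hk | hk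
        · have h1 : (2*(k:ℝ)+2)^8 ≤ 4^8 := pow_le_pow_left₀ (by linarith) (by linarith) 8
          nlinarith [pow_nonneg hk0 8]
        · have h1 : (2*(k:ℝ)+2)^8 ≤ (4*(k:ℝ))^8 := pow_le_pow_left₀ (by linarith) (by linarith) 8
          have h2 : (4*(k:ℝ))^8 = 4^8 * (k:ℝ)^8 := by ring
          nlinarith [pow_nonneg hk0 8]
      have hcknn : (0:ℝ) ≤ c^k := (pow_pos hc0 k).le
      have hmul := mul_le_mul_of_nonneg_right hpoly hcknn
      have hexp : (0:ℝ) < Real.exp 12 := Real.exp_pos _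
      calc Real.exp 12 * (2*(k:ℝ)+2)^8 * c^k
          = Real.exp 12 * ((2*(k:ℝ)+2)^8 * c^k) := by ring
      _ ≤ Real.exp 12 * ((2^16 * (k:ℝ)^8 + 2^16) * c^k) :=
          mul_le_mul_of_nonneg_left hmul hexp.le
      _ = Real.exp 12 * 2^16 * ((k:ℝ)^8 * c^k) + Real.exp 12 * 2^16 * c^k := by ring
  apply summable_of_sum_le (c := ∑' k, g k)
  · intro d
    exact div_nonneg zero_le_one
      (mul_nonneg (Nat.cast_nonneg _) (Real.rpow_nonneg (Nat.cast_nonneg _) _))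
  · intro u
    set ord : {d : ℕ // Odd d} → ℕ := fun d => orderOf (2 : ZMod (d.1)) with hord
    set K := (u.sup fun d => Nat.log 2 (ord d)) + 1 with hK
    have hmap : ∀ d ∈ u, Nat.log 2 (ord d) ∈ Finset.range K := by
      intro d hd
      rw [Finset.mem_range, hK]
      exact Nat.lt_succ_of_le (Finset.le_sup (f := fun d : {d : ℕ // Odd d} => Nat.log 2 (ord d)) hd)
    have hfib := Finset.sum_fiberwise_of_maps_to hmap
      (fun d : {d : ℕ // Odd d} => 1 / ((d.1:ℝ) * ((ord d : ℕ):ℝ)^ε))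
    rw [← hfib]
    have hinner : ∀ k ∈ Finset.range K,
        ∑ d ∈ u.filter (fun d : {d : ℕ // Odd d} => Nat.log 2 (ord d) = k),
          1 / ((d.1:ℝ) * ((ord d : ℕ):ℝ)^ε) ≤ g k := by
      intro k _
      set F := u.filter (fun d : {d : ℕ // Odd d} => Nat.log 2 (ord d) = k) with hF
      have step_a : ∀ d ∈ F, 1 / ((d.1:ℝ) * ((ord d : ℕ):ℝ)^ε)
          ≤ c^k * (1/(d.1:ℝ)) := by
        intro d hd
        rw [hF, Finset.mem_filter] at hd
        have hdpos : 0 < d.1 := by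
          obtain ⟨m, hm⟩ := d.2
          omega
        have hdR : (0:ℝ) < (d.1:ℝ) := by exact_mod_cast hdpos
        have hepos : 0 < ord d := order_pos d.2
        have hge : (2:ℕ)^k ≤ ord d := by
          rw [← hd.2]
          exact Nat.pow_log_le_self 2 hepos.ne'
        have hgeR : ((2:ℝ))^k ≤ ((ord d : ℕ):ℝ) := by exact_mod_cast hge
        have hA : ((2:ℝ)^k)^ε ≤ ((ord d : ℕ):ℝ)^ε :=
          Real.rpow_le_rpow (by positivity) hgeR hε.le
        have hApos : (0:ℝ) < ((2:ℝ)^k)^ε := Real.rpow_pos_of_pos (by positivity) ε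
        have hle : 1 / ((d.1:ℝ) * ((ord d : ℕ):ℝ)^ε)
            ≤ 1/((d.1:ℝ) * ((2:ℝ)^k)^ε) := by
          apply one_div_le_one_div_of_le (by positivity)
          exact mul_le_mul_of_nonneg_left hA hdR.le
        refine hle.trans (le_of_eq ?_)
        have hcA : c^k = (((2:ℝ)^k)^ε)⁻¹ := eq_inv_of_mul_eq_one_left (hck k)
        rw [hcA]
        field_simp
      have step_b : ∑ d ∈ F, 1/(d.1:ℝ) ≤ Real.exp 12 * (2*(k:ℝ)+2)^8 := by
        have himg : ∑ d ∈ F, 1/(d.1:ℝ)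
            = ∑ n ∈ F.image Subtype.val, 1/(n:ℝ) :=
          (Finset.sum_image (f := fun n : ℕ => 1/(n:ℝ)) (g := Subtype.val)
            (fun a _ b _ h => Subtype.ext h)).symm
        rw [himg]
        refine le_trans (Finset.sum_le_sum_of_subset_of_nonneg ?_ ?_) (sum_divisors_Lprod_le k)
        · intro n hn
          rw [Finset.mem_image] at hn
          obtain ⟨d, hdF, rfl⟩ := hn
          rw [hF, Finset.mem_filter] at hdF
          rw [Nat.mem_divisors]
          refine ⟨dvd_Lprod d.2 ?_, (Lprod_pos _).ne'⟩
          have hlt := Nat.lt_pow_succ_log_self (b := 2) (by norm_num) (ord d)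
          rw [hdF.2] at hlt
          show ord d ≤ 2^(k+1)
          omega
        · intro n _ _
          positivity
      calc ∑ d ∈ F, 1 / ((d.1:ℝ) * ((ord d : ℕ):ℝ)^ε)
          ≤ ∑ d ∈ F, c^k * (1/(d.1:ℝ)) := Finset.sum_le_sum step_a
      _ = c^k * ∑ d ∈ F, 1/(d.1:ℝ) := by rw [Finset.mul_sum]
      _ ≤ c^k * (Real.exp 12 * (2*(k:ℝ)+2)^8) :=
          mul_le_mul_of_nonneg_left step_b (pow_pos hc0 k).le
      _ = g k := by rw [hg]; ring
    calc ∑ k ∈ Finset.range K, ∑ d ∈ u.filter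
          (fun d : {d : ℕ // Odd d} => Nat.log 2 (ord d) = k),
          1 / ((d.1:ℝ) * ((ord d : ℕ):ℝ)^ε)
        ≤ ∑ k ∈ Finset.range K, g k := Finset.sum_le_sum hinner
    _ ≤ ∑' k, g k := Summable.sum_le_tsum _ (fun k _ => by rw [hg]; positivity) hgsum
end

section
/- Let r > 1 be a real number. There exist constants C = C(r) and x_0 = x_0(r) such that for all x ≥ x_0, Σ e_2(d)^{1/r}/d ≤ C · (log x)^{1/r}, where the sum is over all odd squarefree positive integers d ≤ x such that every prime factor of d is less than log x and such that e_2(d) ≤ (log x)^{1 − 1/r} · log log x, and e_2(d) is the multiplicative order of 2 modulo d. -/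
open Finset


lemma exists_totient_small (ε : ℝ) (hε : 0 < ε) :
    ∃ a : ℕ, 1 ≤ a ∧ (a.totient : ℝ) ≤ ε * a := by
  have htend := (not_summable_iff_tendsto_nat_atTop_of_nonneg
    (f := Set.indicator {p | p.Prime} (fun n : ℕ ↦ (1 : ℝ) / n))
    (fun n => Set.indicator_nonneg (fun i _ => by positivity) n)).mp
    not_summable_one_div_on_primes
  obtain ⟨K, hK⟩ := (Filter.tendsto_atTop.mp htend (Real.log ε⁻¹)).exists
  have hsum : Real.log ε⁻¹ ≤ ∑ p ∈ K.primesBelow, (1 / p : ℝ) := by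
    rw [Nat.primesBelow]
    rw [Finset.sum_indicator_eq_sum_filter] at hK
    exact hK
  refine ⟨∏ p ∈ K.primesBelow, p, ?_, ?_⟩
  · exact Finset.one_le_prod' (fun p hp => (Nat.prime_of_mem_primesBelow hp).one_lt.le)
  set a : ℕ := ∏ p ∈ K.primesBelow, p with ha
  have hfac : a.primeFactors = K.primesBelow :=
    Nat.primeFactors_prod (fun p hp => Nat.prime_of_mem_primesBelow hp)
  have htot : (a.totient : ℝ) = a * ∏ p ∈ K.primesBelow, (1 - (p : ℝ)⁻¹) := by
    have := Nat.totient_eq_mul_prod_factors a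
    rw [hfac] at this
    have h2 := congrArg (Rat.cast : ℚ → ℝ) this
    push_cast at h2
    exact_mod_cast h2
  rw [htot, mul_comm (ε) (a:ℝ)]
  apply mul_le_mul_of_nonneg_left _ (Nat.cast_nonneg a)
  calc ∏ p ∈ K.primesBelow, (1 - (p : ℝ)⁻¹)
      ≤ ∏ p ∈ K.primesBelow, Real.exp (-(p : ℝ)⁻¹) := by
        refine Finset.prod_le_prod (fun p hp => ?_) (fun p hp => ?_)
        · simp only [sub_nonneg]
          have : (1:ℝ) ≤ (p:ℝ) := by exact_mod_cast (Nat.prime_of_mem_primesBelow hp).one_le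
          exact inv_le_one_of_one_le₀ this
        · linarith [Real.add_one_le_exp (-(p : ℝ)⁻¹)]
    _ = Real.exp (-∑ p ∈ K.primesBelow, (p : ℝ)⁻¹) := by
        rw [← Real.exp_sum, ← Finset.sum_neg_distrib]
    _ ≤ Real.exp (-Real.log ε⁻¹) := by
        apply Real.exp_le_exp.mpr
        simp only [neg_le_neg_iff]
        simpa [one_div] using hsum
    _ = ε := by rw [Real.log_inv, neg_neg, Real.exp_log hε]


lemma coprime_blocks_sum (a : ℕ) (ha : 1 ≤ a) (Q : ℕ) :
    ∑ m ∈ (Finset.Ico a (a * (Q + 1))).filter a.Coprime, (1 / m : ℝ)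
      ≤ ((a.totient : ℝ) / a) * ∑ q ∈ Finset.Ico 1 (Q + 1), (1 / q : ℝ) := by
  induction Q with
  | zero => simp
  | succ Q ih =>
    have h1 : a ≤ a * (Q + 1) := Nat.le_mul_of_pos_right a (Nat.succ_pos Q)
    have h2 : a * (Q + 1) ≤ a * (Q + 2) := Nat.mul_le_mul_left a (by omega)
    have hsplit : Finset.Ico a (a * (Q + 2)) =
        Finset.Ico a (a * (Q + 1)) ∪ Finset.Ico (a * (Q + 1)) (a * (Q + 2)) :=
      (Finset.Ico_union_Ico_eq_Ico h1 h2).symm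
    rw [hsplit, Finset.filter_union, Finset.sum_union (Finset.disjoint_filter_filter
      (Finset.Ico_disjoint_Ico_consecutive a (a * (Q + 1)) (a * (Q + 2))))]
    have hblock : ∑ m ∈ (Finset.Ico (a * (Q + 1)) (a * (Q + 2))).filter a.Coprime, (1 / m : ℝ)
        ≤ ((a.totient : ℝ) / a) * (1 / (Q + 1) : ℝ) := by
      have hcard : ((Finset.Ico (a * (Q + 1)) (a * (Q + 2))).filter a.Coprime).card
          = a.totient := by
        have : a * (Q + 2) = a * (Q + 1) + a := by ring
        rw [this]
        exact Nat.filter_coprime_Ico_eq_totient a (a * (Q + 1))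
      have hterm : ∀ m ∈ (Finset.Ico (a * (Q + 1)) (a * (Q + 2))).filter a.Coprime,
          (1 / m : ℝ) ≤ 1 / (a * (Q + 1) : ℕ) := by
        intro m hm
        simp only [Finset.mem_filter, Finset.mem_Ico] at hm
        apply one_div_le_one_div_of_le
        · positivity
        · exact_mod_cast hm.1.1
      calc ∑ m ∈ (Finset.Ico (a * (Q + 1)) (a * (Q + 2))).filter a.Coprime, (1 / m : ℝ)
          ≤ ((Finset.Ico (a * (Q + 1)) (a * (Q + 2))).filter a.Coprime).card
              • (1 / (a * (Q + 1) : ℕ) : ℝ) := Finset.sum_le_card_nsmul _ _ _ hterm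
        _ = (a.totient : ℝ) * (1 / (a * (Q + 1) : ℕ) : ℝ) := by
            rw [hcard, nsmul_eq_mul]
        _ = ((a.totient : ℝ) / a) * (1 / (Q + 1) : ℝ) := by
            have ha' : (0:ℝ) < a := by exact_mod_cast ha
            push_cast
            field_simp
    rw [Finset.sum_Ico_succ_top (by omega : 1 ≤ Q + 1),
      mul_add ((a.totient : ℝ) / a)]
    push_cast at hblock ⊢
    exact add_le_add ih hblock

lemma harmonic_Ico_le (n : ℕ) : ∑ q ∈ Finset.Ico 1 (n + 1), (1 / q : ℝ)
    ≤ 1 + Real.log n := by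
  have h1 : ∑ q ∈ Finset.Ico 1 (n + 1), (1 / q : ℝ) = (harmonic n : ℝ) := by
    rw [Finset.sum_Ico_eq_sum_range]
    simp only [harmonic]
    push_cast
    refine Finset.sum_congr rfl fun i _ => ?_
    rw [one_div, add_comm]
  rw [h1]
  exact_mod_cast harmonic_le_one_add_log n

lemma sum_primesBelow_one_div_le (ε : ℝ) (hε : 0 < ε) :
    ∃ C : ℝ, ∀ n : ℕ, ∑ p ∈ n.primesBelow, (1 / p : ℝ) ≤ ε * Real.log n + C := by
  obtain ⟨a, ha1, haε⟩ := exists_totient_small ε hε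
  refine ⟨(∑ m ∈ Finset.range (a + 1), (1 / m : ℝ)) + ε, fun n => ?_⟩
  have ha0 : (0:ℝ) < a := by exact_mod_cast ha1
  rw [← Finset.sum_filter_add_sum_filter_not n.primesBelow (fun p => p ≤ a)]
  have hnot : n.primesBelow.filter (fun p => ¬ p ≤ a) = n.primesBelow.filter (fun p => a < p) := by
    apply Finset.filter_congr; intro p _; simp [Nat.not_le]
  rw [hnot]
  have hfirst : ∑ p ∈ n.primesBelow.filter (fun p => p ≤ a), (1 / p : ℝ)
      ≤ ∑ m ∈ Finset.range (a + 1), (1 / m : ℝ) := by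
    apply Finset.sum_le_sum_of_subset_of_nonneg
    · intro p hp
      simp only [Finset.mem_filter] at hp
      exact Finset.mem_range.mpr (by omega)
    · intro m _ _; positivity
  have hsecond : ∑ p ∈ n.primesBelow.filter (fun p => a < p), (1 / p : ℝ)
      ≤ ε * Real.log n + ε := by
    have hsub : n.primesBelow.filter (fun p => a < p)
        ⊆ (Finset.Ico a (a * (n + 1))).filter a.Coprime := by
      intro p hp
      simp only [Finset.mem_filter, Nat.mem_primesBelow] at hp
      obtain ⟨⟨hpn, hpp⟩, hap⟩ := hp
      simp only [Finset.mem_filter, Finset.mem_Ico]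
      refine ⟨⟨hap.le, ?_⟩, ?_⟩
      · calc p < n := hpn
          _ < a * (n + 1) := by nlinarith [ha1]
      · exact (Nat.Coprime.symm ((Nat.Prime.coprime_iff_not_dvd hpp).mpr
          (fun hdvd => absurd (Nat.le_of_dvd (by omega) hdvd) (by omega))))
    calc ∑ p ∈ n.primesBelow.filter (fun p => a < p), (1 / p : ℝ)
        ≤ ∑ m ∈ (Finset.Ico a (a * (n + 1))).filter a.Coprime, (1 / m : ℝ) :=
          Finset.sum_le_sum_of_subset_of_nonneg hsub (fun m _ _ => by positivity)
      _ ≤ ((a.totient : ℝ) / a) * ∑ q ∈ Finset.Ico 1 (n + 1), (1 / q : ℝ) :=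
          coprime_blocks_sum a ha1 n
      _ ≤ ε * (1 + Real.log n) := by
          apply mul_le_mul
          · rw [div_le_iff₀ ha0] at *; linarith
          · exact harmonic_Ico_le n
          · positivity
          · positivity
      _ = ε * Real.log n + ε := by ring
  linarith

/-- `Σ e₂(d)^{1/r}/d ≪_r (log x)^{1/r}`, the sum being over odd squarefree
`d ≤ x` with all prime factors `< log x` and `e₂(d) ≤ (log x)^{1−1/r} log log x`, where
`e₂(d)` is the multiplicative order of `2` mod `d`. -/
theorem sum_order_rpow_div_upper (r : ℝ) (hr : 1 < r) :
    ∃ C x₀ : ℝ, ∀ x : ℝ, x₀ ≤ x →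
      ∑ d ∈ (Finset.Icc 1 ⌊x⌋₊).filter (fun d : ℕ => Odd d ∧ Squarefree d ∧
          (∀ p ∈ d.primeFactors, (p : ℝ) < Real.log x) ∧
          ((orderOf (2 : ZMod d) : ℕ) : ℝ) ≤
            (Real.log x) ^ (1 - 1 / r) * Real.log (Real.log x)),
        ((orderOf (2 : ZMod d) : ℕ) : ℝ) ^ (1 / r) / (d : ℝ)
      ≤ C * (Real.log x) ^ (1 / r) := by
  have hr0 : (0:ℝ) < r := lt_trans one_pos hr
  set δ : ℝ := 1 / (2 * r * r) with hδdef
  have hδ : 0 < δ := by positivity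
  obtain ⟨Cε, hCε⟩ := sum_primesBelow_one_div_le δ hδ
  -- eventual bound log y ≤ y ^ (1/(2r))
  have hlo := (isLittleO_log_rpow_atTop (show (0:ℝ) < 1/(2*r) by positivity)).bound
    one_pos
  obtain ⟨Y₀, hY₀⟩ := Filter.eventually_atTop.mp hlo
  set C : ℝ := Real.exp (Cε + δ * Real.log 2) with hCdef
  refine ⟨C, Real.exp (max Y₀ 1), fun x hx => ?_⟩
  set y : ℝ := Real.log x with hydef
  have hxpos : 0 < x := lt_of_lt_of_le (Real.exp_pos _) hx
  have hy1 : 1 ≤ y := le_trans (le_max_right _ _)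
    (by rw [hydef, ← Real.log_exp (max Y₀ 1)]; exact Real.log_le_log (Real.exp_pos _) hx)
  have hyY : Y₀ ≤ y := le_trans (le_max_left _ _)
    (by rw [hydef, ← Real.log_exp (max Y₀ 1)]; exact Real.log_le_log (Real.exp_pos _) hx)
  have hy0 : 0 < y := lt_of_lt_of_le one_pos hy1
  have hlogy0 : 0 ≤ Real.log y := Real.log_nonneg hy1
  have hlog : Real.log y ≤ y ^ (1/(2*r)) := by
    have := hY₀ y hyY
    rw [one_mul, Real.norm_eq_abs, Real.norm_eq_abs, abs_of_nonneg hlogy0,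
      abs_of_nonneg (Real.rpow_nonneg hy0.le _)] at this
    exact this
  set A := (Finset.Icc 1 ⌊x⌋₊).filter (fun d : ℕ => Odd d ∧ Squarefree d ∧
      (∀ p ∈ d.primeFactors, (p : ℝ) < Real.log x) ∧
      ((orderOf (2 : ZMod d) : ℕ) : ℝ) ≤
        (Real.log x) ^ (1 - 1 / r) * Real.log (Real.log x)) with hAdef
  set P := (⌈y⌉₊).primesBelow with hPdef
  set T : ℝ := y ^ (1 - 1/r) * Real.log y with hTdef
  have hT0 : 0 ≤ T := mul_nonneg (Real.rpow_nonneg hy0.le _) hlogy0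
  -- membership facts
  have hmem : ∀ d ∈ A, Squarefree d ∧ d.primeFactors ⊆ P ∧
      ((orderOf (2 : ZMod d) : ℕ) : ℝ) ≤ T := by
    intro d hd
    rw [hAdef, Finset.mem_filter] at hd
    obtain ⟨-, -, hsq, hpf, hord⟩ := hd
    refine ⟨hsq, fun p hp => ?_, hord⟩
    have hplt : (p : ℝ) < y := hpf p hp
    have : p < ⌈y⌉₊ := by
      have : (p:ℝ) < (⌈y⌉₊ : ℝ) := lt_of_lt_of_le hplt (Nat.le_ceil y)
      exact_mod_cast this
    exact Nat.mem_primesBelow.mpr ⟨this, Nat.prime_of_mem_primeFactors hp⟩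
  -- Step A+B: termwise bound
  have hstep1 : ∑ d ∈ A, ((orderOf (2 : ZMod d) : ℕ) : ℝ) ^ (1 / r) / (d : ℝ)
      ≤ T ^ (1/r) * ∑ d ∈ A, (1 / d : ℝ) := by
    rw [Finset.mul_sum]
    apply Finset.sum_le_sum
    intro d hd
    rw [div_eq_mul_one_div]
    apply mul_le_mul_of_nonneg_right _ (by positivity)
    exact Real.rpow_le_rpow (Nat.cast_nonneg _) (hmem d hd).2.2 (by positivity)
  -- Step C: powerset bound
  have hstep2 : ∑ d ∈ A, (1 / d : ℝ) ≤ ∑ t ∈ P.powerset, ∏ p ∈ t, (1 / p : ℝ) := by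
    have hterm : ∀ d ∈ A, (1 / d : ℝ) = ∏ p ∈ d.primeFactors, (1 / p : ℝ) := by
      intro d hd
      simp only [one_div]
      rw [Finset.prod_inv_distrib]
      congr 1
      rw [← Nat.cast_prod, Nat.prod_primeFactors_of_squarefree (hmem d hd).1]
    rw [Finset.sum_congr rfl hterm]
    have hinj : ∀ d1 ∈ A, ∀ d2 ∈ A, d1.primeFactors = d2.primeFactors → d1 = d2 := by
      intro d1 h1 d2 h2 he
      rw [← Nat.prod_primeFactors_of_squarefree (hmem d1 h1).1,
        ← Nat.prod_primeFactors_of_squarefree (hmem d2 h2).1, he]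
    have heq : ∑ t ∈ A.image Nat.primeFactors, ∏ p ∈ t, (1 / p : ℝ)
        = ∑ d ∈ A, ∏ p ∈ d.primeFactors, (1 / p : ℝ) := Finset.sum_image hinj
    rw [← heq]
    apply Finset.sum_le_sum_of_subset_of_nonneg
    · intro t ht
      rw [Finset.mem_image] at ht
      obtain ⟨d, hd, rfl⟩ := ht
      exact Finset.mem_powerset.mpr (hmem d hd).2.1
    · intro t _ _
      exact Finset.prod_nonneg fun p _ => by positivity
  -- Step D+E: product / exponential bound
  have hstep3 : ∑ t ∈ P.powerset, ∏ p ∈ t, (1 / p : ℝ)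
      ≤ Real.exp (δ * Real.log (⌈y⌉₊ : ℕ) + Cε) := by
    have hd : ∑ t ∈ P.powerset, ∏ p ∈ t, (1 / p : ℝ)
        = ∏ p ∈ P, ((1 : ℝ) / p + 1) := by
      rw [Finset.prod_add]
      simp
    rw [hd]
    calc ∏ p ∈ P, ((1 : ℝ) / p + 1)
        ≤ ∏ p ∈ P, Real.exp (1 / p : ℝ) := by
          apply Finset.prod_le_prod
          · intro p _; positivity
          · intro p _; linarith [Real.add_one_le_exp ((1 : ℝ) / p)]
      _ = Real.exp (∑ p ∈ P, (1 / p : ℝ)) := (Real.exp_sum _ _).symm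
      _ ≤ Real.exp (δ * Real.log (⌈y⌉₊ : ℕ) + Cε) := Real.exp_le_exp.mpr (hCε ⌈y⌉₊)
  -- Step F: ceil bound
  have hstep4 : Real.exp (δ * Real.log (⌈y⌉₊ : ℕ) + Cε) ≤ C * y ^ δ := by
    have hceil : ((⌈y⌉₊ : ℕ) : ℝ) ≤ 2 * y := by
      have h1 : ((⌈y⌉₊ : ℕ) : ℝ) < y + 1 := Nat.ceil_lt_add_one hy0.le
      linarith
    have hlogceil : Real.log (⌈y⌉₊ : ℕ) ≤ Real.log 2 + Real.log y := by
      rw [← Real.log_mul two_ne_zero hy0.ne']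
      exact Real.log_le_log (by positivity) hceil
    have hyd : y ^ δ = Real.exp (Real.log y * δ) := Real.rpow_def_of_pos hy0 δ
    rw [hCdef, hyd, ← Real.exp_add]
    apply Real.exp_le_exp.mpr
    have h1 : δ * Real.log (⌈y⌉₊ : ℕ) ≤ δ * (Real.log 2 + Real.log y) :=
      mul_le_mul_of_nonneg_left hlogceil hδ.le
    linarith
  -- assemble
  have hchain : ∑ d ∈ A, ((orderOf (2 : ZMod d) : ℕ) : ℝ) ^ (1 / r) / (d : ℝ)
      ≤ T ^ (1/r) * (C * y ^ δ) := by
    refine le_trans hstep1 (mul_le_mul_of_nonneg_left ?_ (Real.rpow_nonneg hT0 _))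
    exact le_trans hstep2 (le_trans hstep3 hstep4)
  refine le_trans hchain ?_
  have hTsplit : T ^ (1/r) = y ^ ((1 - 1/r) * (1/r)) * (Real.log y) ^ (1/r) := by
    rw [hTdef, Real.mul_rpow (Real.rpow_nonneg hy0.le _) hlogy0,
      ← Real.rpow_mul hy0.le]
  have hlogpow : (Real.log y) ^ (1/r) ≤ y ^ ((1/(2*r)) * (1/r)) := by
    rw [Real.rpow_mul hy0.le]
    exact Real.rpow_le_rpow hlogy0 hlog (by positivity)
  calc T ^ (1/r) * (C * y ^ δ)
      ≤ (y ^ ((1 - 1/r) * (1/r)) * y ^ ((1/(2*r)) * (1/r))) * (C * y ^ δ) := by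
        rw [hTsplit]
        apply mul_le_mul_of_nonneg_right _ (by positivity)
        exact mul_le_mul_of_nonneg_left hlogpow (Real.rpow_nonneg hy0.le _)
    _ = C * y ^ ((1 - 1/r) * (1/r) + (1/(2*r)) * (1/r) + δ) := by
        rw [Real.rpow_add hy0, Real.rpow_add hy0]; ring
    _ = C * y ^ (1/r) := by
        have hexp : (1 - 1/r) * (1/r) + (1/(2*r)) * (1/r) + δ = 1/r := by
          rw [hδdef]
          field_simp
          ring
        rw [hexp]
end
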